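/- arXiv:0705.4261 — 3 statements merged into one kernel-verified Lean document; each statement's English description precedes it below -/
import Mathlib

section
/- Every quasi-independent subset of ℤ is a Sidon set. -/
open scoped BigOperators

/-- `Λ ⊆ ℤ` is a Sidon set. -/
def IsSidonSet (Λ : Set ℤ) : Prop :=
  ∃ C : ℝ, ∀ F : Finset ℤ, (F : Set ℤ) ⊆ Λ → ∀ a : ℤ → ℂ,
    ∑ l ∈ F, ‖a l‖ ≤
      C * ⨆ t : ℝ, ‖∑ l ∈ F, a l * Complex.exp (Complex.I * l * t)‖

/-- `Λ ⊆ ℤ \ {0}` is quasi-independent: the only relation `∑_{λ∈F} ε_λ λ = 0`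
with `ε_λ ∈ {-1,0,1}` is the trivial one. -/
def QuasiIndependent (Λ : Set ℤ) : Prop :=
  0 ∉ Λ ∧ ∀ F : Finset ℤ, (F : Set ℤ) ⊆ Λ → ∀ ε : ℤ → ℤ,
    (∀ l ∈ F, ε l = -1 ∨ ε l = 0 ∨ ε l = 1) →
    ∑ l ∈ F, ε l * l = 0 → ∀ l ∈ F, ε l = 0

namespace AuxQISidon

open Finset

/-- Two signed supports conflict if some element appears with opposite signs. -/
def Conf (p q : Finset ℤ × Finset ℤ) : Prop :=
  (p.1 ∩ q.2).Nonempty ∨ (p.2 ∩ q.1).Nonempty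

/-- weight of a signed support -/
noncomputable def wt (p : Finset ℤ × Finset ℤ) : ℝ := (8⁻¹ : ℝ) ^ (p.1.card + p.2.card)

lemma wt_nonneg (p : Finset ℤ × Finset ℤ) : 0 ≤ wt p := by
  unfold wt; positivity

lemma conf_symm {p q} (h : Conf p q) : Conf q p := by
  rcases h with h | h
  · exact Or.inr (by rwa [Finset.inter_comm])
  · exact Or.inl (by rwa [Finset.inter_comm])

lemma lemA : ∀ (G : Finset ℤ) (A : Finset (Finset ℤ × Finset ℤ)),
    (∀ p ∈ A, p.1 ⊆ G) → (∀ p ∈ A, p.2 ⊆ G) →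
    (∀ p ∈ A, p ≠ (∅, ∅)) →
    (∀ p ∈ A, Disjoint p.1 p.2) →
    (∀ p ∈ A, ∀ q ∈ A, p ≠ q → Conf p q) →
    ∑ p ∈ A, wt p ≤ 3⁻¹ := by
  intro G
  induction G using Finset.induction_on with
  | empty =>
      intro A h1 h2 h3 _ _
      have hA : A = ∅ := by
        rw [Finset.eq_empty_iff_forall_notMem]
        intro p hp
        exact h3 p hp (Prod.ext (Finset.subset_empty.1 (h1 p hp))
          (Finset.subset_empty.1 (h2 p hp)))
      rw [hA]
      simp
  | @insert μ G' hμ IH =>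
      intro A h1 h2 h3 h4 h5
      classical
      set er1 : Finset ℤ × Finset ℤ → Finset ℤ × Finset ℤ := fun p => (p.1.erase μ, p.2) with her1
      set er2 : Finset ℤ × Finset ℤ → Finset ℤ × Finset ℤ := fun p => (p.1, p.2.erase μ) with her2
      set A1 := A.filter (fun p => μ ∈ p.1) with hA1def
      set A2 := A.filter (fun p => μ ∈ p.2) with hA2def
      set C := A.filter (fun p => μ ∉ p.1 ∧ μ ∉ p.2) with hCdef
      have hA1mem : ∀ p ∈ A1, p ∈ A ∧ μ ∈ p.1 := fun p hp => Finset.mem_filter.1 hp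
      have hA2mem : ∀ p ∈ A2, p ∈ A ∧ μ ∈ p.2 := fun p hp => Finset.mem_filter.1 hp
      have hCmem : ∀ p ∈ C, p ∈ A ∧ μ ∉ p.1 ∧ μ ∉ p.2 := fun p hp => Finset.mem_filter.1 hp
      -- partition of the sum
      have hsplit : ∑ p ∈ A, wt p = ∑ p ∈ A1, wt p + ∑ p ∈ A2, wt p + ∑ p ∈ C, wt p := by
        rw [← Finset.sum_filter_add_sum_filter_not A (fun p => μ ∈ p.1) wt]
        rw [← Finset.sum_filter_add_sum_filter_not (A.filter (fun p => ¬ μ ∈ p.1))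
          (fun p => μ ∈ p.2) wt]
        rw [Finset.filter_filter, Finset.filter_filter]
        have e2 : A.filter (fun p => ¬ μ ∈ p.1 ∧ μ ∈ p.2) = A2 := by
          apply Finset.filter_congr
          intro p hp
          constructor
          · rintro ⟨_, h⟩; exact h
          · intro h; exact ⟨Finset.disjoint_right.1 (h4 p hp) h, h⟩
        have e3 : A.filter (fun p => ¬ μ ∈ p.1 ∧ ¬ μ ∈ p.2) = C := rfl
        rw [e2, e3]
        ring
      -- generic facts
      have hsub1 : ∀ p ∈ A, p.1.erase μ ⊆ G' := by
        intro p hp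
        have h' := Finset.erase_subset_erase μ (h1 p hp)
        rwa [Finset.erase_insert hμ] at h'
      have hsub2 : ∀ p ∈ A, p.2.erase μ ⊆ G' := by
        intro p hp
        have h' := Finset.erase_subset_erase μ (h2 p hp)
        rwa [Finset.erase_insert hμ] at h'
      have hsub1' : ∀ p ∈ A, μ ∉ p.1 → p.1 ⊆ G' := by
        intro p hp hn
        have := hsub1 p hp
        rwa [Finset.erase_eq_of_notMem hn] at this
      have hsub2' : ∀ p ∈ A, μ ∉ p.2 → p.2 ⊆ G' := by
        intro p hp hn
        have := hsub2 p hp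
        rwa [Finset.erase_eq_of_notMem hn] at this
      -- conflict transfer lemmas
      have htrans1 : ∀ p ∈ A, ∀ q ∈ A, p ≠ q → μ ∉ p.2 → μ ∉ q.2 → Conf (er1 p) (er1 q) := by
        intro p hp q hq hne hp2 hq2
        rcases h5 p hp q hq hne with ⟨x, hx⟩ | ⟨x, hx⟩
        · rcases Finset.mem_inter.1 hx with ⟨hx1, hx2⟩
          exact Or.inl ⟨x, Finset.mem_inter.2 ⟨Finset.mem_erase.2 ⟨fun he => hq2 (he ▸ hx2), hx1⟩, hx2⟩⟩
        · rcases Finset.mem_inter.1 hx with ⟨hx1, hx2⟩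
          exact Or.inr ⟨x, Finset.mem_inter.2 ⟨hx1, Finset.mem_erase.2 ⟨fun he => hp2 (he ▸ hx1), hx2⟩⟩⟩
      have htrans2 : ∀ p ∈ A, ∀ q ∈ A, p ≠ q → μ ∉ p.1 → μ ∉ q.1 → Conf (er2 p) (er2 q) := by
        intro p hp q hq hne hp1 hq1
        rcases h5 p hp q hq hne with ⟨x, hx⟩ | ⟨x, hx⟩
        · rcases Finset.mem_inter.1 hx with ⟨hx1, hx2⟩
          exact Or.inl ⟨x, Finset.mem_inter.2 ⟨hx1, Finset.mem_erase.2 ⟨fun he => hp1 (he ▸ hx1), hx2⟩⟩⟩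
        · rcases Finset.mem_inter.1 hx with ⟨hx1, hx2⟩
          exact Or.inr ⟨x, Finset.mem_inter.2 ⟨Finset.mem_erase.2 ⟨fun he => hq1 (he ▸ hx2), hx1⟩, hx2⟩⟩
      -- weight relations
      have hwt1 : ∀ p, μ ∈ p.1 → wt (er1 p) = 8 * wt p := by
        intro p hp
        unfold wt
        simp only [her1]
        have hc := Finset.card_erase_add_one hp
        rw [show p.1.card + p.2.card = ((p.1.erase μ).card + p.2.card) + 1 by omega, pow_succ]
        ring
      have hwt2 : ∀ p, μ ∈ p.2 → wt (er2 p) = 8 * wt p := by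
        intro p hp
        unfold wt
        simp only [her2]
        have hc := Finset.card_erase_add_one hp
        rw [show p.1.card + p.2.card = (p.1.card + (p.2.erase μ).card) + 1 by omega, pow_succ]
        ring
      -- the two union-family bounds
      have key1 : (({μ}, (∅ : Finset ℤ)) : Finset ℤ × Finset ℤ) ∉ A →
          8 * (∑ p ∈ A1, wt p) + ∑ p ∈ C, wt p ≤ 3⁻¹ := by
        intro hs
        -- er1 is injective on A1
        have hinj : ∀ p ∈ A1, ∀ q ∈ A1, er1 p = er1 q → p = q := by
          intro p hp q hq he
          obtain ⟨hpA, hp1⟩ := hA1mem p hp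
          obtain ⟨hqA, hq1⟩ := hA1mem q hq
          have h2' : p.2 = q.2 := by
            have := congrArg Prod.snd he; simpa [her1] using this
          have h1' : p.1.erase μ = q.1.erase μ := by
            have := congrArg Prod.fst he; simpa [her1] using this
          have : p.1 = q.1 := by
            rw [← Finset.insert_erase hp1, ← Finset.insert_erase hq1, h1']
          exact Prod.ext this h2'
        have hdisjIC : Disjoint (A1.image er1) C := by
          rw [Finset.disjoint_left]
          rintro q hq hqC
          rcases Finset.mem_image.1 hq with ⟨p, hp, rfl⟩
          obtain ⟨hpA, hp1⟩ := hA1mem p hp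
          obtain ⟨hqA, hq1, hq2⟩ := hCmem _ hqC
          have hne : p ≠ er1 p := by
            intro he
            have : p.1 = p.1.erase μ := congrArg Prod.fst he
            exact (Finset.notMem_erase μ p.1) (this ▸ hp1)
          rcases h5 p hpA (er1 p) hqA hne with ⟨x, hx⟩ | ⟨x, hx⟩
          · rcases Finset.mem_inter.1 hx with ⟨hx1, hx2⟩
            exact Finset.disjoint_left.1 (h4 p hpA) hx1 hx2
          · rcases Finset.mem_inter.1 hx with ⟨hx1, hx2⟩
            exact Finset.disjoint_left.1 (h4 p hpA) (Finset.mem_of_mem_erase hx2) hx1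
        have hIH : ∑ q ∈ (A1.image er1) ∪ C, wt q ≤ 3⁻¹ := by
          apply IH
          · intro q hq
            rcases Finset.mem_union.1 hq with hq | hq
            · rcases Finset.mem_image.1 hq with ⟨p, hp, rfl⟩
              exact hsub1 p (hA1mem p hp).1
            · obtain ⟨hqA, hq1, _⟩ := hCmem q hq
              exact hsub1' q hqA hq1
          · intro q hq
            rcases Finset.mem_union.1 hq with hq | hq
            · rcases Finset.mem_image.1 hq with ⟨p, hp, rfl⟩
              obtain ⟨hpA, hp1⟩ := hA1mem p hp
              exact hsub2' p hpA (Finset.disjoint_left.1 (h4 p hpA) hp1)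
            · obtain ⟨hqA, _, hq2⟩ := hCmem q hq
              exact hsub2' q hqA hq2
          · intro q hq
            rcases Finset.mem_union.1 hq with hq | hq
            · rcases Finset.mem_image.1 hq with ⟨p, hp, rfl⟩
              obtain ⟨hpA, hp1⟩ := hA1mem p hp
              intro he
              have he1 : p.1.erase μ = ∅ := congrArg Prod.fst he
              have he2 : p.2 = ∅ := congrArg Prod.snd he
              rcases (Finset.erase_eq_empty_iff p.1 μ).1 he1 with h0 | h0
              · exact (Finset.notMem_empty μ) (h0 ▸ hp1)
              · have hp' : p = ({μ}, ∅) := Prod.ext h0 he2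
                exact hs (hp' ▸ hpA)
            · exact h3 q (hCmem q hq).1
          · intro q hq
            rcases Finset.mem_union.1 hq with hq | hq
            · rcases Finset.mem_image.1 hq with ⟨p, hp, rfl⟩
              obtain ⟨hpA, _⟩ := hA1mem p hp
              exact Finset.disjoint_of_subset_left (Finset.erase_subset μ p.1) (h4 p hpA)
            · exact h4 q (hCmem q hq).1
          · intro q1 hq1 q2 hq2 hne
            have repr : ∀ q ∈ (A1.image er1) ∪ C, ∃ p ∈ A, μ ∉ p.2 ∧ q = er1 p := by
              intro q hq
              rcases Finset.mem_union.1 hq with hq | hq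
              · rcases Finset.mem_image.1 hq with ⟨p, hp, rfl⟩
                obtain ⟨hpA, hp1⟩ := hA1mem p hp
                exact ⟨p, hpA, Finset.disjoint_left.1 (h4 p hpA) hp1, rfl⟩
              · obtain ⟨hqA, hq1', hq2'⟩ := hCmem q hq
                exact ⟨q, hqA, hq2', by simp [her1, Finset.erase_eq_of_notMem hq1']⟩
            obtain ⟨p1, hp1A, hp1n, rfl⟩ := repr q1 hq1
            obtain ⟨p2, hp2A, hp2n, rfl⟩ := repr q2 hq2
            exact htrans1 p1 hp1A p2 hp2A (fun he => hne (congrArg er1 he)) hp1n hp2n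
        rw [Finset.sum_union hdisjIC, Finset.sum_image hinj] at hIH
        calc 8 * (∑ p ∈ A1, wt p) + ∑ p ∈ C, wt p
            = (∑ p ∈ A1, wt (er1 p)) + ∑ p ∈ C, wt p := by
              rw [Finset.mul_sum]
              congr 1
              exact Finset.sum_congr rfl (fun p hp => (hwt1 p (hA1mem p hp).2).symm)
          _ ≤ 3⁻¹ := hIH
      have key2 : ((∅ : Finset ℤ), ({μ} : Finset ℤ)) ∉ A →
          8 * (∑ p ∈ A2, wt p) + ∑ p ∈ C, wt p ≤ 3⁻¹ := by
        intro hs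
        have hinj : ∀ p ∈ A2, ∀ q ∈ A2, er2 p = er2 q → p = q := by
          intro p hp q hq he
          obtain ⟨hpA, hp2⟩ := hA2mem p hp
          obtain ⟨hqA, hq2⟩ := hA2mem q hq
          have h1' : p.1 = q.1 := by
            have := congrArg Prod.fst he; simpa [her2] using this
          have h2' : p.2.erase μ = q.2.erase μ := by
            have := congrArg Prod.snd he; simpa [her2] using this
          have : p.2 = q.2 := by
            rw [← Finset.insert_erase hp2, ← Finset.insert_erase hq2, h2']
          exact Prod.ext h1' this
        have hdisjIC : Disjoint (A2.image er2) C := by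
          rw [Finset.disjoint_left]
          rintro q hq hqC
          rcases Finset.mem_image.1 hq with ⟨p, hp, rfl⟩
          obtain ⟨hpA, hp2⟩ := hA2mem p hp
          obtain ⟨hqA, hq1, hq2⟩ := hCmem _ hqC
          have hne : p ≠ er2 p := by
            intro he
            have : p.2 = p.2.erase μ := congrArg Prod.snd he
            exact (Finset.notMem_erase μ p.2) (this ▸ hp2)
          rcases h5 p hpA (er2 p) hqA hne with ⟨x, hx⟩ | ⟨x, hx⟩
          · rcases Finset.mem_inter.1 hx with ⟨hx1, hx2⟩
            exact Finset.disjoint_left.1 (h4 p hpA) hx1 (Finset.mem_of_mem_erase hx2)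
          · rcases Finset.mem_inter.1 hx with ⟨hx1, hx2⟩
            exact Finset.disjoint_left.1 (h4 p hpA) hx2 hx1
        have hIH : ∑ q ∈ (A2.image er2) ∪ C, wt q ≤ 3⁻¹ := by
          apply IH
          · intro q hq
            rcases Finset.mem_union.1 hq with hq | hq
            · rcases Finset.mem_image.1 hq with ⟨p, hp, rfl⟩
              obtain ⟨hpA, hp2⟩ := hA2mem p hp
              exact hsub1' p hpA (Finset.disjoint_right.1 (h4 p hpA) hp2)
            · obtain ⟨hqA, hq1, _⟩ := hCmem q hq
              exact hsub1' q hqA hq1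
          · intro q hq
            rcases Finset.mem_union.1 hq with hq | hq
            · rcases Finset.mem_image.1 hq with ⟨p, hp, rfl⟩
              exact hsub2 p (hA2mem p hp).1
            · obtain ⟨hqA, _, hq2⟩ := hCmem q hq
              exact hsub2' q hqA hq2
          · intro q hq
            rcases Finset.mem_union.1 hq with hq | hq
            · rcases Finset.mem_image.1 hq with ⟨p, hp, rfl⟩
              obtain ⟨hpA, hp2⟩ := hA2mem p hp
              intro he
              have he1 : p.1 = ∅ := congrArg Prod.fst he
              have he2 : p.2.erase μ = ∅ := congrArg Prod.snd he
              rcases (Finset.erase_eq_empty_iff p.2 μ).1 he2 with h0 | h0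
              · exact (Finset.notMem_empty μ) (h0 ▸ hp2)
              · have hp' : p = (∅, {μ}) := Prod.ext he1 h0
                exact hs (hp' ▸ hpA)
            · exact h3 q (hCmem q hq).1
          · intro q hq
            rcases Finset.mem_union.1 hq with hq | hq
            · rcases Finset.mem_image.1 hq with ⟨p, hp, rfl⟩
              obtain ⟨hpA, _⟩ := hA2mem p hp
              exact Finset.disjoint_of_subset_right (Finset.erase_subset μ p.2) (h4 p hpA)
            · exact h4 q (hCmem q hq).1
          · intro q1 hq1 q2 hq2 hne
            have repr : ∀ q ∈ (A2.image er2) ∪ C, ∃ p ∈ A, μ ∉ p.1 ∧ q = er2 p := by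
              intro q hq
              rcases Finset.mem_union.1 hq with hq | hq
              · rcases Finset.mem_image.1 hq with ⟨p, hp, rfl⟩
                obtain ⟨hpA, hp2⟩ := hA2mem p hp
                exact ⟨p, hpA, Finset.disjoint_right.1 (h4 p hpA) hp2, rfl⟩
              · obtain ⟨hqA, hq1', hq2'⟩ := hCmem q hq
                exact ⟨q, hqA, hq1', by simp [her2, Finset.erase_eq_of_notMem hq2']⟩
            obtain ⟨p1, hp1A, hp1n, rfl⟩ := repr q1 hq1
            obtain ⟨p2, hp2A, hp2n, rfl⟩ := repr q2 hq2
            exact htrans2 p1 hp1A p2 hp2A (fun he => hne (congrArg er2 he)) hp1n hp2n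
        rw [Finset.sum_union hdisjIC, Finset.sum_image hinj] at hIH
        calc 8 * (∑ p ∈ A2, wt p) + ∑ p ∈ C, wt p
            = (∑ p ∈ A2, wt (er2 p)) + ∑ p ∈ C, wt p := by
              rw [Finset.mul_sum]
              congr 1
              exact Finset.sum_congr rfl (fun p hp => (hwt2 p (hA2mem p hp).2).symm)
          _ ≤ 3⁻¹ := hIH
      -- nonnegativity of partial sums
      have hx0 : 0 ≤ ∑ p ∈ A1, wt p := Finset.sum_nonneg (fun p _ => wt_nonneg p)
      have hy0 : 0 ≤ ∑ p ∈ A2, wt p := Finset.sum_nonneg (fun p _ => wt_nonneg p)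
      have hz0 : 0 ≤ ∑ p ∈ C, wt p := Finset.sum_nonneg (fun p _ => wt_nonneg p)
      by_cases hs : (({μ}, (∅ : Finset ℤ)) : Finset ℤ × Finset ℤ) ∈ A
      · -- C = ∅ and A1 = {({μ},∅)}
        have hmu2 : ∀ q ∈ A, q ≠ ({μ}, ∅) → μ ∈ q.2 := by
          intro q hq hne
          rcases h5 _ hs q hq (fun he => hne he.symm) with ⟨x, hx⟩ | ⟨x, hx⟩
          · rcases Finset.mem_inter.1 hx with ⟨hx1, hx2⟩
            rwa [Finset.mem_singleton.1 hx1] at hx2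
          · rcases Finset.mem_inter.1 hx with ⟨hx1, hx2⟩
            exact absurd hx1 (Finset.notMem_empty x)
        have hCempty : C = ∅ := by
          rw [Finset.eq_empty_iff_forall_notMem]
          intro q hq
          obtain ⟨hqA, hq1, hq2⟩ := hCmem q hq
          by_cases he : q = ({μ}, ∅)
          · rw [he] at hq1; exact hq1 (Finset.mem_singleton_self μ)
          · exact hq2 (hmu2 q hqA he)
        have hA1s : A1 = {({μ}, ∅)} := by
          apply Finset.Subset.antisymm
          · intro q hq
            obtain ⟨hqA, hq1⟩ := hA1mem q hq
            rw [Finset.mem_singleton]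
            by_contra hne
            exact Finset.disjoint_left.1 (h4 q hqA) hq1 (hmu2 q hqA hne)
          · intro q hq
            rw [Finset.mem_singleton.1 hq]
            exact Finset.mem_filter.2 ⟨hs, Finset.mem_singleton_self μ⟩
        by_cases ht : ((∅ : Finset ℤ), ({μ} : Finset ℤ)) ∈ A
        · have hA2s : A2 = {((∅ : Finset ℤ), ({μ} : Finset ℤ))} := by
            have hmu1 : ∀ q ∈ A, q ≠ (∅, {μ}) → μ ∈ q.1 := by
              intro q hq hne
              rcases h5 _ ht q hq (fun he => hne he.symm) with ⟨x, hx⟩ | ⟨x, hx⟩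
              · rcases Finset.mem_inter.1 hx with ⟨hx1, hx2⟩
                exact absurd hx1 (Finset.notMem_empty x)
              · rcases Finset.mem_inter.1 hx with ⟨hx1, hx2⟩
                rwa [Finset.mem_singleton.1 hx1] at hx2
            apply Finset.Subset.antisymm
            · intro q hq
              obtain ⟨hqA, hq2⟩ := hA2mem q hq
              rw [Finset.mem_singleton]
              by_contra hne
              exact Finset.disjoint_left.1 (h4 q hqA) (hmu1 q hqA hne) hq2
            · intro q hq
              rw [Finset.mem_singleton.1 hq]
              exact Finset.mem_filter.2 ⟨ht, Finset.mem_singleton_self μ⟩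
          rw [hsplit, hCempty, hA1s, hA2s]
          simp [wt]
          norm_num
        · have hk := key2 ht
          rw [hsplit, hCempty, hA1s]
          simp only [Finset.sum_empty, Finset.sum_singleton]
          have hwts : wt (({μ} : Finset ℤ), (∅ : Finset ℤ)) = 8⁻¹ := by
            simp [wt]
          rw [hCempty] at hk
          simp only [Finset.sum_empty] at hk
          rw [hwts]
          linarith
      · by_cases ht : ((∅ : Finset ℤ), ({μ} : Finset ℤ)) ∈ A
        · -- mirror: C = ∅, A2 = {(∅,{μ})}
          have hmu1 : ∀ q ∈ A, q ≠ (∅, {μ}) → μ ∈ q.1 := by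
            intro q hq hne
            rcases h5 _ ht q hq (fun he => hne he.symm) with ⟨x, hx⟩ | ⟨x, hx⟩
            · rcases Finset.mem_inter.1 hx with ⟨hx1, hx2⟩
              exact absurd hx1 (Finset.notMem_empty x)
            · rcases Finset.mem_inter.1 hx with ⟨hx1, hx2⟩
              rwa [Finset.mem_singleton.1 hx1] at hx2
          have hCempty : C = ∅ := by
            rw [Finset.eq_empty_iff_forall_notMem]
            intro q hq
            obtain ⟨hqA, hq1, hq2⟩ := hCmem q hq
            by_cases he : q = (∅, {μ})
            · rw [he] at hq2; exact hq2 (Finset.mem_singleton_self μ)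
            · exact hq1 (hmu1 q hqA he)
          have hA2s : A2 = {((∅ : Finset ℤ), ({μ} : Finset ℤ))} := by
            apply Finset.Subset.antisymm
            · intro q hq
              obtain ⟨hqA, hq2⟩ := hA2mem q hq
              rw [Finset.mem_singleton]
              by_contra hne
              exact Finset.disjoint_left.1 (h4 q hqA) (hmu1 q hqA hne) hq2
            · intro q hq
              rw [Finset.mem_singleton.1 hq]
              exact Finset.mem_filter.2 ⟨ht, Finset.mem_singleton_self μ⟩
          have hk := key1 hs
          rw [hsplit, hCempty, hA2s]
          simp only [Finset.sum_empty, Finset.sum_singleton]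
          have hwts : wt ((∅ : Finset ℤ), ({μ} : Finset ℤ)) = 8⁻¹ := by
            simp [wt]
          rw [hCempty] at hk
          simp only [Finset.sum_empty] at hk
          rw [hwts]
          linarith
        · have hk1 := key1 hs
          have hk2 := key2 ht
          rw [hsplit]
          linarith

lemma lemB {Λ : Set ℤ} (h : QuasiIndependent Λ) {F : Finset ℤ} (hF : (F : Set ℤ) ⊆ Λ)
    {p q : Finset ℤ × Finset ℤ}
    (hp1 : p.1 ⊆ F) (hp2 : p.2 ⊆ F) (hq1 : q.1 ⊆ F) (hq2 : q.2 ⊆ F)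
    (hdp : Disjoint p.1 p.2) (hdq : Disjoint q.1 q.2)
    (hv : (∑ l ∈ p.1, l) - ∑ l ∈ p.2, l = (∑ l ∈ q.1, l) - ∑ l ∈ q.2, l)
    (hne : p ≠ q) : Conf p q := by
  classical
  by_contra hc
  rw [Conf, not_or] at hc
  obtain ⟨hc1, hc2⟩ := hc
  rw [Finset.not_nonempty_iff_eq_empty, ← Finset.disjoint_iff_inter_eq_empty] at hc1 hc2
  -- membership exclusions
  have d12 : ∀ l, l ∈ p.1 → l ∉ p.2 := fun l hl => Finset.disjoint_left.1 hdp hl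
  have d34 : ∀ l, l ∈ q.1 → l ∉ q.2 := fun l hl => Finset.disjoint_left.1 hdq hl
  have d14 : ∀ l, l ∈ p.1 → l ∉ q.2 := fun l hl => Finset.disjoint_left.1 hc1 hl
  have d23 : ∀ l, l ∈ p.2 → l ∉ q.1 := fun l hl => Finset.disjoint_left.1 hc2 hl
  set ε : ℤ → ℤ := fun l =>
    (if l ∈ p.1 then 1 else 0) - (if l ∈ p.2 then 1 else 0)
      - (if l ∈ q.1 then 1 else 0) + (if l ∈ q.2 then 1 else 0) with hε
  have hrange : ∀ l ∈ F, ε l = -1 ∨ ε l = 0 ∨ ε l = 1 := by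
    intro l _
    simp only [hε]
    by_cases a1 : l ∈ p.1 <;> by_cases a2 : l ∈ p.2 <;>
      by_cases b1 : l ∈ q.1 <;> by_cases b2 : l ∈ q.2 <;>
      first
        | (exact absurd a2 (d12 l a1))
        | (exact absurd b2 (d34 l b1))
        | (exact absurd b2 (d14 l a1))
        | (exact absurd b1 (d23 l a2))
        | (simp [a1, a2, b1, b2])
  have hsum : ∑ l ∈ F, ε l * l = 0 := by
    have expand : ∀ l, ε l * l =
        (if l ∈ p.1 then l else 0) - (if l ∈ p.2 then l else 0)
          - (if l ∈ q.1 then l else 0) + (if l ∈ q.2 then l else 0) := by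
      intro l
      simp only [hε]
      by_cases a1 : l ∈ p.1 <;> by_cases a2 : l ∈ p.2 <;>
        by_cases b1 : l ∈ q.1 <;> by_cases b2 : l ∈ q.2 <;>
        simp [a1, a2, b1, b2] <;> ring
    rw [Finset.sum_congr rfl (fun l _ => expand l)]
    rw [Finset.sum_add_distrib, Finset.sum_sub_distrib, Finset.sum_sub_distrib]
    rw [Finset.sum_ite_mem, Finset.sum_ite_mem, Finset.sum_ite_mem, Finset.sum_ite_mem]
    rw [Finset.inter_eq_right.2 hp1, Finset.inter_eq_right.2 hp2,
      Finset.inter_eq_right.2 hq1, Finset.inter_eq_right.2 hq2]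
    omega
  have hzero := h.2 F hF ε hrange hsum
  -- derive equality of components
  have e1 : p.1 = q.1 := by
    apply Finset.Subset.antisymm
    · intro l hl
      have hz := hzero l (hp1 hl)
      simp only [hε] at hz
      by_contra hb1
      rw [if_pos hl, if_neg (d12 l hl), if_neg hb1, if_neg (d14 l hl)] at hz
      norm_num at hz
    · intro l hl
      have hz := hzero l (hq1 hl)
      simp only [hε] at hz
      by_contra ha1
      rw [if_neg ha1, if_neg (fun hx => (d23 l hx) hl), if_pos hl,
        if_neg (d34 l hl)] at hz
      norm_num at hz
  have e2 : p.2 = q.2 := by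
    apply Finset.Subset.antisymm
    · intro l hl
      have hz := hzero l (hp2 hl)
      simp only [hε] at hz
      by_contra hb2
      rw [if_neg (fun hx => (d12 l hx) hl), if_pos hl, if_neg (d23 l hl),
        if_neg hb2] at hz
      norm_num at hz
    · intro l hl
      have hz := hzero l (hq2 hl)
      simp only [hε] at hz
      by_contra ha2
      rw [if_neg (fun hx => (d14 l hx) hl), if_neg ha2,
        if_neg (fun hx => (d34 l hx) hl), if_pos hl] at hz
      norm_num at hz
  exact hne (Prod.ext e1 e2)


lemma sum_exp_eq (m : ℤ) (N : ℕ) (hmN : |m| < (N : ℤ)) :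
    ∑ j ∈ Finset.range N, Complex.exp (Complex.I * m * (2 * Real.pi * j / N))
      = if m = 0 then (N : ℂ) else 0 := by
  have hN0 : 0 < N := by
    have h0 := abs_nonneg m
    have : (0:ℤ) < (N:ℤ) := lt_of_le_of_lt h0 hmN
    exact_mod_cast this
  have hNC : (N : ℂ) ≠ 0 := by
    simp only [ne_eq, Nat.cast_eq_zero]
    omega
  by_cases hm : m = 0
  · subst hm
    simp
  · rw [if_neg hm]
    set z : ℂ := Complex.exp (Complex.I * m * (2 * Real.pi / N)) with hz
    have hterm : ∀ j ∈ Finset.range N,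
        Complex.exp (Complex.I * m * (2 * Real.pi * j / N)) = z ^ j := by
      intro j _
      rw [hz, ← Complex.exp_nat_mul]
      congr 1
      ring
    rw [Finset.sum_congr rfl hterm]
    have hzN : z ^ N = 1 := by
      rw [hz, ← Complex.exp_nat_mul]
      rw [show ((N:ℂ) * (Complex.I * m * (2 * Real.pi / N)))
          = (m : ℂ) * (2 * Real.pi * Complex.I) by
        field_simp]
      exact Complex.exp_int_mul_two_pi_mul_I m
    have hz1 : z ≠ 1 := by
      intro h1
      rw [hz, Complex.exp_eq_one_iff] at h1
      obtain ⟨n, hn⟩ := h1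
      have hpi : (Real.pi : ℂ) ≠ 0 := by
        exact_mod_cast Real.pi_ne_zero
      have hI : Complex.I ≠ 0 := Complex.I_ne_zero
      have hmn : (m : ℂ) = (n : ℂ) * N := by
        field_simp at hn
        have h2 : (2 : ℂ) * Real.pi * Complex.I ≠ 0 := by
          simp [hpi, hI]
        -- hn should be like: I * m * (2 * π) = n * (2 * π * I) * N (after clearing /N)
        linear_combination hn
      have hmnZ : m = n * N := by exact_mod_cast hmn
      have hn0 : n ≠ 0 := by
        intro h0
        rw [h0] at hmnZ
        simp at hmnZ
        exact hm hmnZ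
      have : (N : ℤ) ≤ |m| := by
        rw [hmnZ, abs_mul]
        calc (N:ℤ) = 1 * (N:ℤ) := (one_mul _).symm
          _ ≤ |n| * |(N:ℤ)| := by
              apply mul_le_mul
              · exact Int.one_le_abs hn0
              · simp
              · omega
              · exact abs_nonneg n
      omega
    rw [geom_sum_eq hz1, hzN]
    simp


lemma expand_prod (F : Finset ℤ) (x y : ℤ → ℂ) :
    ∏ l ∈ F, (1 + x l + y l)
      = ∑ p ∈ (F.powerset ×ˢ F.powerset).filter (fun p => Disjoint p.1 p.2),
          (∏ l ∈ p.1, x l) * ∏ l ∈ p.2, y l := by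
  classical
  have step1 : ∏ l ∈ F, (1 + x l + y l) = ∏ l ∈ F, ((x l + y l) + 1) :=
    Finset.prod_congr rfl (fun l _ => by ring)
  rw [step1, Finset.prod_add]
  have step2 : ∀ T ∈ F.powerset,
      (∏ l ∈ T, (x l + y l)) * (∏ l ∈ F \ T, (1:ℂ))
        = ∑ P ∈ T.powerset, (∏ l ∈ P, x l) * ∏ l ∈ T \ P, y l := by
    intro T _
    rw [Finset.prod_const_one, mul_one, Finset.prod_add]
  rw [Finset.sum_congr rfl step2]
  rw [Finset.sum_sigma' (F.powerset) (fun T => T.powerset)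
    (fun T P => (∏ l ∈ P, x l) * ∏ l ∈ T \ P, y l)]
  apply Finset.sum_nbij' (fun (s : Σ _ : Finset ℤ, Finset ℤ) => (s.2, s.1 \ s.2))
    (fun (p : Finset ℤ × Finset ℤ) => (⟨p.1 ∪ p.2, p.1⟩ : Σ _ : Finset ℤ, Finset ℤ))
  · intro s hs
    rw [Finset.mem_sigma] at hs
    obtain ⟨h1, h2⟩ := hs
    rw [Finset.mem_powerset] at h1 h2
    rw [Finset.mem_filter, Finset.mem_product]
    refine ⟨⟨?_, ?_⟩, ?_⟩
    · exact Finset.mem_powerset.2 (h2.trans h1)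
    · exact Finset.mem_powerset.2 ((Finset.sdiff_subset).trans h1)
    · exact Finset.disjoint_sdiff
  · intro p hp
    rw [Finset.mem_filter, Finset.mem_product] at hp
    obtain ⟨⟨h1, h2⟩, _⟩ := hp
    rw [Finset.mem_powerset] at h1 h2
    rw [Finset.mem_sigma]
    exact ⟨Finset.mem_powerset.2 (Finset.union_subset h1 h2), Finset.mem_powerset.2 Finset.subset_union_left⟩
  · intro s hs
    rw [Finset.mem_sigma] at hs
    obtain ⟨h1, h2⟩ := hs
    rw [Finset.mem_powerset] at h2
    have : s.2 ∪ s.1 \ s.2 = s.1 := Finset.union_sdiff_of_subset h2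
    exact Sigma.ext this HEq.rfl
  · intro p hp
    rw [Finset.mem_filter, Finset.mem_product] at hp
    obtain ⟨_, hd⟩ := hp
    have : (p.1 ∪ p.2) \ p.1 = p.2 := Finset.union_sdiff_cancel_left hd
    rw [this]
  · intro s _
    rfl


end AuxQISidon

open AuxQISidon Finset in
/-- Every quasi-independent subset of `ℤ` is a Sidon set. -/
theorem isSidonSet_of_quasiIndependent (Λ : Set ℤ) (h : QuasiIndependent Λ) :
    IsSidonSet Λ := by
  classical
  refine ⟨12, ?_⟩
  intro F hF a
  -- the supremum and its basic properties
  set M : ℝ := ⨆ t : ℝ, ‖∑ l ∈ F, a l * Complex.exp (Complex.I * l * t)‖ with hM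
  set Sa : ℝ := ∑ l ∈ F, ‖a l‖ with hSa
  have hSa0 : 0 ≤ Sa := Finset.sum_nonneg (fun l _ => norm_nonneg _)
  -- unimodular phases
  set u : ℤ → ℂ := fun l => if a l = 0 then 1 else a l / ((‖a l‖ : ℝ) : ℂ) with hu
  have hu_norm : ∀ l, ‖u l‖ = 1 := by
    intro l
    rw [hu]
    by_cases h0 : a l = 0
    · simp [h0]
    · have : ‖a l‖ ≠ 0 := by
        simp [h0]
      simp only [h0, if_false]
      rw [norm_div, Complex.norm_real,
        norm_norm]
      field_simp
  have habs_u : ∀ l, ‖u l‖ = 1 := by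
    intro l; exact hu_norm l
  have hu_ne : ∀ l, u l ≠ 0 := by
    intro l h0
    have := hu_norm l; rw [h0] at this; simp at this
  have hu_inv : ∀ l, (u l)⁻¹ = (starRingEnd ℂ) (u l) := fun l => Complex.inv_eq_conj (hu_norm l)
  have habs_uinv : ∀ l, ‖(u l)⁻¹‖ = 1 := by
    intro l; rw [norm_inv, habs_u]; norm_num
  have hu_mul : ∀ l, a l * (u l)⁻¹ = ((‖a l‖ : ℝ) : ℂ) := by
    intro l
    rw [hu]
    by_cases h0 : a l = 0
    · simp [h0]
    · have hne : ((‖a l‖ : ℝ) : ℂ) ≠ 0 := by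
        simp [h0]
      simp only [h0, if_false]
      field_simp
  -- absolute value of exponentials
  have habs_exp : ∀ (m : ℤ) (t : ℝ), ‖Complex.exp (Complex.I * m * t)‖ = 1 := by
    intro m t
    rw [Complex.norm_exp]
    have : (Complex.I * m * t).re = 0 := by simp
    rw [this, Real.exp_zero]
  -- bound for the supremum
  have habs_f : ∀ t : ℝ, ‖∑ l ∈ F, a l * Complex.exp (Complex.I * l * t)‖ ≤ Sa := by
    intro t
    calc ‖∑ l ∈ F, a l * Complex.exp (Complex.I * l * t)‖
        ≤ ∑ l ∈ F, ‖a l * Complex.exp (Complex.I * l * t)‖ := norm_sum_le _ _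
      _ = Sa := by
          rw [hSa]
          apply Finset.sum_congr rfl
          intro l _
          rw [norm_mul, habs_exp, mul_one]
  have hbdd : BddAbove (Set.range fun t : ℝ =>
      ‖∑ l ∈ F, a l * Complex.exp (Complex.I * l * t)‖) := by
    refine ⟨Sa, ?_⟩
    rintro x ⟨t, rfl⟩
    exact habs_f t
  have hM_ge : ∀ t : ℝ, ‖∑ l ∈ F, a l * Complex.exp (Complex.I * l * t)‖ ≤ M :=
    fun t => le_ciSup hbdd t
  have hM0 : 0 ≤ M := le_trans (norm_nonneg _) (hM_ge 0)
  -- frequencies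
  set B : ℕ := ∑ l ∈ F, l.natAbs with hB
  set N : ℕ := 2 * B + 1 with hN
  have hN0 : 0 < N := by omega
  set τ : ℕ → ℝ := fun j => 2 * Real.pi * j / N with hτ
  have hBsum : (∑ l ∈ F, |l|) = (B : ℤ) := by
    rw [hB]
    push_cast
    rfl
  have hlF : ∀ l ∈ F, |l| ≤ (B : ℤ) := by
    intro l hl
    rw [← hBsum]
    exact Finset.single_le_sum (fun i _ => abs_nonneg i) hl
  -- index set of the Riesz product expansion
  set 𝒟 : Finset (Finset ℤ × Finset ℤ) :=
    (F.powerset ×ˢ F.powerset).filter (fun p => Disjoint p.1 p.2) with hD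
  have hDmem : ∀ p ∈ 𝒟, p.1 ⊆ F ∧ p.2 ⊆ F ∧ Disjoint p.1 p.2 := by
    intro p hp
    rw [hD, Finset.mem_filter, Finset.mem_product, Finset.mem_powerset, Finset.mem_powerset] at hp
    exact ⟨hp.1.1, hp.1.2, hp.2⟩
  set val : Finset ℤ × Finset ℤ → ℤ := fun p => (∑ l ∈ p.1, l) - ∑ l ∈ p.2, l with hval
  set c : Finset ℤ × Finset ℤ → ℂ :=
    fun p => (8⁻¹ : ℂ) ^ (p.1.card + p.2.card) * (∏ l ∈ p.1, u l) * (∏ l ∈ p.2, (u l)⁻¹) with hc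
  have habs_c : ∀ p, ‖c p‖ = wt p := by
    intro p
    rw [hc]
    simp only
    rw [norm_mul, norm_mul, norm_pow]
    rw [show ‖(8⁻¹ : ℂ)‖ = (8⁻¹ : ℝ) by
      rw [norm_inv]; norm_num]
    rw [show ‖∏ l ∈ p.1, u l‖ = 1 by
      rw [norm_prod]; exact Finset.prod_eq_one (fun l _ => habs_u l)]
    rw [show ‖∏ l ∈ p.2, (u l)⁻¹‖ = 1 by
      rw [norm_prod]; exact Finset.prod_eq_one (fun l _ => habs_uinv l)]
    rw [wt]
    ring
  have hval_bound : ∀ p ∈ 𝒟, |val p| ≤ (B : ℤ) := by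
    intro p hp
    obtain ⟨h1, h2, hd⟩ := hDmem p hp
    have e1 : |∑ l ∈ p.1, l| ≤ ∑ l ∈ p.1, |l| := Finset.abs_sum_le_sum_abs _ _
    have e2 : |∑ l ∈ p.2, l| ≤ ∑ l ∈ p.2, |l| := Finset.abs_sum_le_sum_abs _ _
    have e3 : ∑ l ∈ p.1, |l| + ∑ l ∈ p.2, |l| = ∑ l ∈ p.1 ∪ p.2, |l| :=
      (Finset.sum_union hd).symm
    have e4 : ∑ l ∈ p.1 ∪ p.2, |l| ≤ ∑ l ∈ F, |l| :=
      Finset.sum_le_sum_of_subset_of_nonneg (Finset.union_subset h1 h2)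
        (fun i _ _ => abs_nonneg i)
    have e5 : |val p| ≤ |∑ l ∈ p.1, l| + |∑ l ∈ p.2, l| := by
      rw [hval]
      exact abs_sub _ _
    rw [← hBsum]
    linarith
  -- rep of 0 is trivial
  have hrep0 : ∀ p ∈ 𝒟, val p = 0 → p = (∅, ∅) := by
    intro p hp hv
    obtain ⟨h1, h2, hd⟩ := hDmem p hp
    by_contra hne
    have hconf : Conf p ((∅ : Finset ℤ), (∅ : Finset ℤ)) := by
      apply lemB h hF h1 h2 (Finset.empty_subset F) (Finset.empty_subset F) hd
        (Finset.disjoint_empty_left _)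
      · simpa using hv
      · exact hne
    rcases hconf with ⟨x, hx⟩ | ⟨x, hx⟩ <;> simp at hx
  -- orthogonality
  have key : ∀ m : ℤ, |m| ≤ 2 * (B : ℤ) →
      ∑ j ∈ Finset.range N, Complex.exp (Complex.I * m * τ j)
        = if m = 0 then (N : ℂ) else 0 := by
    intro m hm
    have : |m| < (N : ℤ) := by
      rw [hN]; push_cast; omega
    simpa [hτ] using sum_exp_eq m N this
  -- expansion of the Riesz product
  have hexpand : ∀ t : ℝ,
      (∏ l ∈ F, (1 + 8⁻¹ * u l * Complex.exp (Complex.I * l * t)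
        + 8⁻¹ * (u l)⁻¹ * Complex.exp (-(Complex.I * l * t))))
      = ∑ p ∈ 𝒟, c p * Complex.exp (Complex.I * (val p) * t) := by
    intro t
    rw [expand_prod F (fun l => 8⁻¹ * u l * Complex.exp (Complex.I * l * t))
      (fun l => 8⁻¹ * (u l)⁻¹ * Complex.exp (-(Complex.I * l * t)))]
    rw [← hD]
    apply Finset.sum_congr rfl
    intro p hp
    rw [Finset.prod_mul_distrib, Finset.prod_mul_distrib, Finset.prod_mul_distrib,
      Finset.prod_mul_distrib, Finset.prod_const, Finset.prod_const]
    rw [← Complex.exp_sum, ← Complex.exp_sum]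
    have e1 : ∑ l ∈ p.1, (Complex.I * (l : ℂ) * (t : ℂ))
        = Complex.I * (((∑ l ∈ p.1, l : ℤ) : ℂ)) * t := by
      push_cast
      rw [← Finset.sum_mul, ← Finset.mul_sum]
    have e2 : ∑ l ∈ p.2, (-(Complex.I * (l : ℂ) * (t : ℂ)))
        = -(Complex.I * (((∑ l ∈ p.2, l : ℤ) : ℂ)) * t) := by
      rw [Finset.sum_neg_distrib]
      push_cast
      rw [← Finset.sum_mul, ← Finset.mul_sum]
    rw [e1, e2]
    have e3 : Complex.exp (Complex.I * ((val p : ℤ) : ℂ) * t)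
        = Complex.exp (Complex.I * (((∑ l ∈ p.1, l : ℤ) : ℂ)) * t)
          * Complex.exp (-(Complex.I * (((∑ l ∈ p.2, l : ℤ) : ℂ)) * t)) := by
      rw [← Complex.exp_add]
      congr 1
      rw [hval]
      push_cast
      ring
    rw [e3, hc]
    simp only
    rw [pow_add]
    ring
  -- real form of the factors
  have hQreal : ∀ t : ℝ,
      (∏ l ∈ F, (1 + 8⁻¹ * u l * Complex.exp (Complex.I * l * t)
        + 8⁻¹ * (u l)⁻¹ * Complex.exp (-(Complex.I * l * t))))
      = (((∏ l ∈ F, (1 + 4⁻¹ * (u l * Complex.exp (Complex.I * l * t)).re)) : ℝ) : ℂ) := by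
    intro t
    rw [Complex.ofReal_prod]
    apply Finset.prod_congr rfl
    intro l _
    have hconjE : (starRingEnd ℂ) (Complex.exp (Complex.I * l * t))
        = Complex.exp (-(Complex.I * l * t)) := by
      rw [← Complex.exp_conj]
      congr 1
      simp [Complex.conj_I]
    have hzconj : (u l)⁻¹ * Complex.exp (-(Complex.I * l * t))
        = (starRingEnd ℂ) (u l * Complex.exp (Complex.I * l * t)) := by
      rw [map_mul, hu_inv l, hconjE]
    have haddconj := Complex.add_conj (u l * Complex.exp (Complex.I * l * t))
    calc 1 + 8⁻¹ * u l * Complex.exp (Complex.I * l * t)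
          + 8⁻¹ * (u l)⁻¹ * Complex.exp (-(Complex.I * l * t))
        = 1 + 8⁻¹ * (u l * Complex.exp (Complex.I * l * t)
            + (starRingEnd ℂ) (u l * Complex.exp (Complex.I * l * t))) := by
          rw [← hzconj]; ring
      _ = 1 + 8⁻¹ * (((2 * (u l * Complex.exp (Complex.I * l * t)).re : ℝ)) : ℂ) := by
          rw [haddconj]
      _ = (((1 + 4⁻¹ * (u l * Complex.exp (Complex.I * l * t)).re : ℝ)) : ℂ) := by
          push_cast
          ring
  -- nonnegativity of factors
  have hfac_nonneg : ∀ t : ℝ, ∀ l, 0 ≤ 1 + 4⁻¹ * (u l * Complex.exp (Complex.I * l * t)).re := by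
    intro t l
    have h1 : ‖u l * Complex.exp (Complex.I * l * t)‖ = 1 := by
      rw [norm_mul, habs_u, habs_exp, mul_one]
    have h2 : |(u l * Complex.exp (Complex.I * l * t)).re| ≤ 1 := by
      rw [← h1]
      exact Complex.abs_re_le_norm _
    rw [abs_le] at h2
    linarith [h2.1]
  have hQr_nonneg : ∀ t : ℝ,
      0 ≤ ∏ l ∈ F, (1 + 4⁻¹ * (u l * Complex.exp (Complex.I * l * t)).re) :=
    fun t => Finset.prod_nonneg (fun l _ => hfac_nonneg t l)
  -- average of the Riesz product
  have hDempty : ((∅ : Finset ℤ), (∅ : Finset ℤ)) ∈ 𝒟 := by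
    rw [hD, Finset.mem_filter, Finset.mem_product]
    simp
  have havgQ : ∑ j ∈ Finset.range N,
      (∏ l ∈ F, (1 + 8⁻¹ * u l * Complex.exp (Complex.I * l * τ j)
        + 8⁻¹ * (u l)⁻¹ * Complex.exp (-(Complex.I * l * τ j)))) = (N : ℂ) := by
    rw [Finset.sum_congr rfl (fun j _ => hexpand (τ j))]
    rw [Finset.sum_comm]
    rw [Finset.sum_congr rfl (fun p (hp : p ∈ 𝒟) => (Finset.mul_sum _ _ _).symm)]
    rw [Finset.sum_congr rfl (fun p (hp : p ∈ 𝒟) => by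
      rw [key (val p) (le_trans (hval_bound p hp) (by omega))])]
    rw [Finset.sum_eq_single_of_mem ((∅ : Finset ℤ), (∅ : Finset ℤ)) hDempty]
    · rw [if_pos]
      · rw [hc]; simp
      · rw [hval]; simp
    · intro p hp hne
      rw [if_neg (fun h0 => hne (hrep0 p hp h0)), mul_zero]
  have hsumQr : ∑ j ∈ Finset.range N,
      (∏ l ∈ F, (1 + 4⁻¹ * (u l * Complex.exp (Complex.I * l * τ j)).re)) = (N : ℝ) := by
    have h1 := havgQ
    rw [Finset.sum_congr rfl (fun j _ => hQreal (τ j))] at h1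
    exact_mod_cast h1
  -- the main sum
  set T : ℤ → ℂ := fun l => ∑ p ∈ 𝒟, (if val p = -l then c p else 0) with hT
  have hS : ∑ j ∈ Finset.range N,
      ((∑ l ∈ F, a l * Complex.exp (Complex.I * l * τ j))
        * ∏ l ∈ F, (1 + 8⁻¹ * u l * Complex.exp (Complex.I * l * τ j)
          + 8⁻¹ * (u l)⁻¹ * Complex.exp (-(Complex.I * l * τ j))))
      = (N : ℂ) * ∑ l ∈ F, a l * T l := by
    have hterm : ∀ j ∈ Finset.range N,
        ((∑ l ∈ F, a l * Complex.exp (Complex.I * l * τ j))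
          * ∏ l ∈ F, (1 + 8⁻¹ * u l * Complex.exp (Complex.I * l * τ j)
            + 8⁻¹ * (u l)⁻¹ * Complex.exp (-(Complex.I * l * τ j))))
        = ∑ l ∈ F, ∑ p ∈ 𝒟, (a l * c p)
            * Complex.exp (Complex.I * ((l + val p : ℤ) : ℂ) * τ j) := by
      intro j _
      rw [hexpand (τ j), Finset.sum_mul_sum]
      apply Finset.sum_congr rfl
      intro l _
      apply Finset.sum_congr rfl
      intro p _
      rw [show (Complex.I * ((l + val p : ℤ) : ℂ) * (τ j : ℂ))
          = Complex.I * l * τ j + Complex.I * (val p) * τ j by push_cast; ring]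
      rw [Complex.exp_add]
      ring
    rw [Finset.sum_congr rfl hterm]
    rw [Finset.sum_comm]
    rw [Finset.sum_congr rfl (fun l (hl : l ∈ F) => Finset.sum_comm)]
    have hinner : ∀ l ∈ F, ∀ p ∈ 𝒟,
        ∑ j ∈ Finset.range N, (a l * c p)
          * Complex.exp (Complex.I * ((l + val p : ℤ) : ℂ) * τ j)
        = (a l * c p) * (if (l + val p : ℤ) = 0 then (N : ℂ) else 0) := by
      intro l hl p hp
      rw [← Finset.mul_sum]
      congr 1
      apply key
      have h1 := hlF l hl
      have h2 := hval_bound p hp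
      have : |l + val p| ≤ |l| + |val p| := abs_add_le _ _
      omega
    rw [Finset.sum_congr rfl (fun l hl =>
      Finset.sum_congr rfl (fun p hp => hinner l hl p hp))]
    rw [Finset.mul_sum]
    apply Finset.sum_congr rfl
    intro l hl
    rw [hT]
    simp only
    rw [Finset.mul_sum, Finset.mul_sum]
    apply Finset.sum_congr rfl
    intro p hp
    by_cases hvp : val p = -l
    · rw [if_pos (by omega : (l + val p : ℤ) = 0), if_pos hvp]
      ring
    · rw [if_neg (by omega : ¬ (l + val p : ℤ) = 0), if_neg hvp]
      ring
  -- computing T l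
  have hTl : ∀ l ∈ F, T l = 8⁻¹ * (u l)⁻¹
      + ∑ p ∈ 𝒟.erase ((∅ : Finset ℤ), ({l} : Finset ℤ)), (if val p = -l then c p else 0) := by
    intro l hl
    have hp0 : ((∅ : Finset ℤ), ({l} : Finset ℤ)) ∈ 𝒟 := by
      rw [hD, Finset.mem_filter, Finset.mem_product]
      refine ⟨⟨by simp, Finset.mem_powerset.2 (Finset.singleton_subset_iff.2 hl)⟩, by simp⟩
    rw [hT]
    simp only
    rw [← Finset.add_sum_erase _ _ hp0]
    congr 1
    rw [if_pos]
    · rw [hc]; simp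
    · rw [hval]; simp
  -- error bound
  have herr : ∀ l ∈ F,
      ‖∑ p ∈ 𝒟.erase ((∅ : Finset ℤ), ({l} : Finset ℤ)),
        (if val p = -l then c p else 0)‖ ≤ 24⁻¹ := by
    intro l hl
    have hl0 : l ≠ 0 := by
      intro h0
      exact h.1 (h0 ▸ hF hl)
    set R := (𝒟.erase ((∅ : Finset ℤ), ({l} : Finset ℤ))).filter (fun p => val p = -l) with hR
    have hRmem : ∀ p ∈ R, p ∈ 𝒟 ∧ p ≠ ((∅ : Finset ℤ), ({l} : Finset ℤ)) ∧ val p = -l := by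
      intro p hp
      rw [hR, Finset.mem_filter, Finset.mem_erase] at hp
      exact ⟨hp.1.2, hp.1.1, hp.2⟩
    have hlp1 : ∀ p ∈ R, l ∈ p.1 := by
      intro p hp
      obtain ⟨hpD, hpne, hpv⟩ := hRmem p hp
      obtain ⟨h1, h2, hd⟩ := hDmem p hpD
      have hconf : Conf p ((∅ : Finset ℤ), ({l} : Finset ℤ)) := by
        apply lemB h hF h1 h2 (Finset.empty_subset F)
          (Finset.singleton_subset_iff.2 hl) hd (by simp)
        · have h' : (∑ x ∈ p.1, x) - ∑ x ∈ p.2, x = -l := hpv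
          rw [h']
          simp
        · exact hpne
      rcases hconf with ⟨x, hx⟩ | ⟨x, hx⟩
      · rcases Finset.mem_inter.1 hx with ⟨hx1, hx2⟩
        rwa [Finset.mem_singleton.1 hx2] at hx1
      · rcases Finset.mem_inter.1 hx with ⟨hx1, hx2⟩
        exact absurd hx2 (Finset.notMem_empty x)
    -- map into the abstract family
    set er : Finset ℤ × Finset ℤ → Finset ℤ × Finset ℤ := fun p => (p.1.erase l, p.2) with her
    have hinj : ∀ p ∈ R, ∀ q ∈ R, er p = er q → p = q := by
      intro p hp q hq he
      have h1' : p.1.erase l = q.1.erase l := by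
        have := congrArg Prod.fst he; simpa [her] using this
      have h2' : p.2 = q.2 := by
        have := congrArg Prod.snd he; simpa [her] using this
      have : p.1 = q.1 := by
        rw [← Finset.insert_erase (hlp1 p hp), ← Finset.insert_erase (hlp1 q hq), h1']
      exact Prod.ext this h2'
    have hwt_er : ∀ p ∈ R, wt p = 8⁻¹ * wt (er p) := by
      intro p hp
      have hc' := Finset.card_erase_add_one (hlp1 p hp)
      rw [wt, wt]
      simp only [her]
      rw [show p.1.card + p.2.card = ((p.1.erase l).card + p.2.card) + 1 by omega, pow_succ]
      ring
    have hlemA : ∑ q ∈ R.image er, wt q ≤ 3⁻¹ := by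
      apply lemA (F.erase l)
      · intro q hq
        rcases Finset.mem_image.1 hq with ⟨p, hp, rfl⟩
        obtain ⟨hpD, _, _⟩ := hRmem p hp
        exact Finset.erase_subset_erase l (hDmem p hpD).1
      · intro q hq
        rcases Finset.mem_image.1 hq with ⟨p, hp, rfl⟩
        obtain ⟨hpD, _, _⟩ := hRmem p hp
        obtain ⟨h1, h2, hd⟩ := hDmem p hpD
        exact Finset.subset_erase.2 ⟨h2, Finset.disjoint_left.1 hd (hlp1 p hp)⟩
      · intro q hq
        rcases Finset.mem_image.1 hq with ⟨p, hp, rfl⟩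
        obtain ⟨hpD, hpne, hpv⟩ := hRmem p hp
        intro he
        have he1 : p.1.erase l = ∅ := by
          have := congrArg Prod.fst he; simpa [her] using this
        have he2 : p.2 = ∅ := by
          have := congrArg Prod.snd he; simpa [her] using this
        rcases (Finset.erase_eq_empty_iff p.1 l).1 he1 with h0 | h0
        · exact (Finset.notMem_empty l) (h0 ▸ hlp1 p hp)
        · have : val p = l := by
            have h' : val p = (∑ x ∈ p.1, x) - ∑ x ∈ p.2, x := rfl
            rw [h', h0, he2]; simp
          rw [hpv] at this
          omega
      · intro q hq
        rcases Finset.mem_image.1 hq with ⟨p, hp, rfl⟩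
        obtain ⟨hpD, _, _⟩ := hRmem p hp
        exact Finset.disjoint_of_subset_left (Finset.erase_subset l p.1)
          (hDmem p hpD).2.2
      · intro q1 hq1 q2 hq2 hne12
        rcases Finset.mem_image.1 hq1 with ⟨p1, hp1, rfl⟩
        rcases Finset.mem_image.1 hq2 with ⟨p2, hp2, rfl⟩
        obtain ⟨hp1D, _, hp1v⟩ := hRmem p1 hp1
        obtain ⟨hp2D, _, hp2v⟩ := hRmem p2 hp2
        obtain ⟨h11, h12, hd1⟩ := hDmem p1 hp1D
        obtain ⟨h21, h22, hd2⟩ := hDmem p2 hp2D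
        have hpne : p1 ≠ p2 := fun he => hne12 (congrArg er he)
        have hconf : Conf p1 p2 := by
          apply lemB h hF h11 h12 h21 h22 hd1 hd2
          · have e1 : (∑ x ∈ p1.1, x) - ∑ x ∈ p1.2, x = -l := hp1v
            have e2 : (∑ x ∈ p2.1, x) - ∑ x ∈ p2.2, x = -l := hp2v
            rw [e1, e2]
          · exact hpne
        rcases hconf with ⟨x, hx⟩ | ⟨x, hx⟩
        · rcases Finset.mem_inter.1 hx with ⟨hx1, hx2⟩
          have hxl : x ≠ l := fun he =>
            (Finset.disjoint_left.1 hd2 (hlp1 p2 hp2)) (he ▸ hx2)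
          exact Or.inl ⟨x, Finset.mem_inter.2
            ⟨Finset.mem_erase.2 ⟨hxl, hx1⟩, hx2⟩⟩
        · rcases Finset.mem_inter.1 hx with ⟨hx1, hx2⟩
          have hxl : x ≠ l := fun he =>
            (Finset.disjoint_left.1 hd1 (hlp1 p1 hp1)) (he ▸ hx1)
          exact Or.inr ⟨x, Finset.mem_inter.2
            ⟨hx1, Finset.mem_erase.2 ⟨hxl, hx2⟩⟩⟩
    rw [Finset.sum_image hinj] at hlemA
    have hwtsum : ∑ p ∈ R, wt p ≤ 24⁻¹ := by
      have : ∑ p ∈ R, wt p = 8⁻¹ * ∑ p ∈ R, wt (er p) := by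
        rw [Finset.mul_sum]
        exact Finset.sum_congr rfl hwt_er
      rw [this]
      linarith
    calc ‖∑ p ∈ 𝒟.erase ((∅ : Finset ℤ), ({l} : Finset ℤ)),
          (if val p = -l then c p else 0)‖
        = ‖∑ p ∈ R, c p‖ := by
          rw [hR, Finset.sum_filter]
      _ ≤ ∑ p ∈ R, ‖c p‖ := by
          refine le_trans (norm_sum_le _ _) ?_
          apply le_of_eq
          exact Finset.sum_congr rfl (fun p _ => rfl)
      _ = ∑ p ∈ R, wt p := Finset.sum_congr rfl (fun p _ => habs_c p)
      _ ≤ 24⁻¹ := hwtsum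
  -- lower bound for the main sum
  have hsplitT : ∑ l ∈ F, a l * T l
      = (((8⁻¹ * Sa : ℝ)) : ℂ)
        + ∑ l ∈ F, a l * (∑ p ∈ 𝒟.erase ((∅ : Finset ℤ), ({l} : Finset ℤ)),
            (if val p = -l then c p else 0)) := by
    rw [Finset.sum_congr rfl (fun l hl => by rw [hTl l hl, mul_add])]
    rw [Finset.sum_add_distrib]
    congr 1
    rw [hSa]
    push_cast
    rw [Finset.mul_sum]
    apply Finset.sum_congr rfl
    intro l _
    rw [show a l * (8⁻¹ * (u l)⁻¹) = 8⁻¹ * (a l * (u l)⁻¹) by ring, hu_mul l]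
  have habs_errsum : ‖∑ l ∈ F, a l
      * (∑ p ∈ 𝒟.erase ((∅ : Finset ℤ), ({l} : Finset ℤ)),
          (if val p = -l then c p else 0))‖ ≤ 24⁻¹ * Sa := by
    refine le_trans (norm_sum_le _ _) ?_
    have hle : ∀ l ∈ F, ‖a l * (∑ p ∈ 𝒟.erase ((∅ : Finset ℤ), ({l} : Finset ℤ)),
        (if val p = -l then c p else 0))‖ ≤ ‖a l‖ * 24⁻¹ := by
      intro l hl
      rw [norm_mul]
      exact mul_le_mul_of_nonneg_left (herr l hl) (norm_nonneg _)
    refine le_trans (Finset.sum_le_sum hle) ?_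
    rw [hSa, Finset.mul_sum]
    apply le_of_eq
    exact Finset.sum_congr rfl (fun l _ => by ring)
  have hlow : 12⁻¹ * Sa ≤ ‖∑ l ∈ F, a l * T l‖ := by
    have h1 : ‖((8⁻¹ * Sa : ℝ) : ℂ)‖ = 8⁻¹ * Sa := by
      rw [Complex.norm_real, Real.norm_eq_abs, abs_of_nonneg (by linarith)]
    have h2 : ‖((8⁻¹ * Sa : ℝ) : ℂ)‖
        ≤ ‖∑ l ∈ F, a l * T l‖
          + ‖∑ l ∈ F, a l * (∑ p ∈ 𝒟.erase ((∅ : Finset ℤ), ({l} : Finset ℤ)),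
              (if val p = -l then c p else 0))‖ := by
      have he : (((8⁻¹ * Sa : ℝ)) : ℂ) = (∑ l ∈ F, a l * T l)
          - ∑ l ∈ F, a l * (∑ p ∈ 𝒟.erase ((∅ : Finset ℤ), ({l} : Finset ℤ)),
              (if val p = -l then c p else 0)) := by
        rw [hsplitT]; ring
      rw [he]
      exact norm_sub_le _ _
    rw [h1] at h2
    linarith
  -- upper bound
  have hup : ‖(N : ℂ) * ∑ l ∈ F, a l * T l‖ ≤ M * N := by
    rw [← hS]
    refine le_trans (norm_sum_le _ _) ?_
    have hle : ∀ j ∈ Finset.range N,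
        ‖(∑ l ∈ F, a l * Complex.exp (Complex.I * l * τ j))
          * ∏ l ∈ F, (1 + 8⁻¹ * u l * Complex.exp (Complex.I * l * τ j)
            + 8⁻¹ * (u l)⁻¹ * Complex.exp (-(Complex.I * l * τ j)))‖
        ≤ M * (∏ l ∈ F, (1 + 4⁻¹ * (u l * Complex.exp (Complex.I * l * τ j)).re)) := by
      intro j _
      rw [norm_mul, hQreal (τ j)]
      rw [Complex.norm_real, Real.norm_eq_abs,
        abs_of_nonneg (hQr_nonneg (τ j))]
      exact mul_le_mul_of_nonneg_right (hM_ge (τ j)) (hQr_nonneg (τ j))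
    refine le_trans (Finset.sum_le_sum hle) ?_
    rw [← Finset.mul_sum, hsumQr]
  have habsN : ‖(N : ℂ) * ∑ l ∈ F, a l * T l‖
      = (N : ℝ) * ‖∑ l ∈ F, a l * T l‖ := by
    rw [norm_mul]
    congr 1
    rw [Complex.norm_natCast]
  rw [habsN] at hup
  have hNR : (0 : ℝ) < (N : ℝ) := by exact_mod_cast hN0
  have hfinal : 12⁻¹ * Sa ≤ M := by
    have h1 : (N : ℝ) * (12⁻¹ * Sa) ≤ (N : ℝ) * ‖∑ l ∈ F, a l * T l‖ :=
      mul_le_mul_of_nonneg_left hlow (le_of_lt hNR)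
    have h2 : (N : ℝ) * (12⁻¹ * Sa) ≤ M * N := le_trans h1 hup
    nlinarith
  linarith
end

section
/- If Λ ⊆ ℕ is a Sidon set, then |Λ ∩ [1, N]| = O(log N) as N → ∞. -/
open scoped BigOperators

/-- `Λ ⊆ ℕ` is a Sidon set (as a set of frequencies). -/
def IsSidonSetNat (Λ : Set ℕ) : Prop :=
  ∃ C : ℝ, ∀ F : Finset ℕ, (F : Set ℕ) ⊆ Λ → ∀ a : ℕ → ℂ,
    ∑ l ∈ F, ‖a l‖ ≤
      C * ⨆ t : ℝ, ‖∑ l ∈ F, a l * Complex.exp (Complex.I * l * t)‖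

lemma sidon_aux_signs (F : Finset ℕ) {J : Type} [Fintype J] [Nonempty J]
    (u : J → ℕ → ℝ) (hu : ∀ j l, |u j l| ≤ 1) (θ : ℝ) (hθ : 0 < θ) :
    ∃ σ : Finset ℕ, ∀ j : J,
      ∑ l ∈ F, (if l ∈ σ then (1:ℝ) else -1) * u j l
        ≤ θ * F.card / 2 + Real.log (Fintype.card J) / θ := by
  classical
  set n := F.card with hn
  have key : ∀ j : J,
      ∑ σ ∈ F.powerset,
        Real.exp (θ * ∑ l ∈ F, (if l ∈ σ then (1:ℝ) else -1) * u j l)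
      = ∏ l ∈ F, (Real.exp (θ * u j l) + Real.exp (-(θ * u j l))) := by
    intro j
    rw [Finset.prod_add]
    refine Finset.sum_congr rfl ?_
    intro σ hσ
    have hσF : σ ⊆ F := Finset.mem_powerset.mp hσ
    rw [← Real.exp_sum, ← Real.exp_sum, ← Real.exp_add]
    congr 1
    have hsplit : ∑ l ∈ F \ σ, θ * ((if l ∈ σ then (1:ℝ) else -1) * u j l)
        + ∑ l ∈ σ, θ * ((if l ∈ σ then (1:ℝ) else -1) * u j l)
        = ∑ l ∈ F, θ * ((if l ∈ σ then (1:ℝ) else -1) * u j l) :=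
      Finset.sum_sdiff hσF
    rw [Finset.mul_sum, ← hsplit, add_comm]
    congr 1
    · exact Finset.sum_congr rfl fun l hl => by rw [if_pos hl]; ring
    · exact Finset.sum_congr rfl fun l hl => by
        rw [if_neg (Finset.mem_sdiff.mp hl).2]; ring
  have hfac : ∀ j : J,
      ∏ l ∈ F, (Real.exp (θ * u j l) + Real.exp (-(θ * u j l)))
        ≤ (2 * Real.exp (θ^2/2))^n := by
    intro j
    rw [← Finset.prod_const]
    refine Finset.prod_le_prod (fun l _ => by positivity) ?_
    intro l _
    have h1 : Real.exp (θ * u j l) + Real.exp (-(θ * u j l))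
        = 2 * Real.cosh (θ * u j l) := by rw [Real.cosh_eq]; ring
    rw [h1]
    have h2 : (θ * u j l)^2 ≤ θ^2 := by
      have h := abs_le.mp (hu j l)
      have hu2 : (u j l)^2 ≤ 1 := by nlinarith [h.1, h.2]
      nlinarith [mul_nonneg (sq_nonneg θ) (sub_nonneg.mpr hu2)]
    have := Real.cosh_le_exp_half_sq (θ * u j l)
    have h3 : Real.exp ((θ * u j l)^2/2) ≤ Real.exp (θ^2/2) :=
      Real.exp_le_exp.mpr (by linarith)
    linarith
  set c : ℝ := (Fintype.card J : ℝ) * Real.exp (θ^2/2)^n with hc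
  have total : ∑ σ ∈ F.powerset,
      (∑ j : J, Real.exp (θ * ∑ l ∈ F, (if l ∈ σ then (1:ℝ) else -1) * u j l))
      ≤ ∑ _σ ∈ F.powerset, c := by
    rw [Finset.sum_comm, Finset.sum_const, Finset.card_powerset]
    calc ∑ j : J, ∑ σ ∈ F.powerset,
          Real.exp (θ * ∑ l ∈ F, (if l ∈ σ then (1:ℝ) else -1) * u j l)
        ≤ ∑ _j : J, (2 * Real.exp (θ^2/2))^n := by
          refine Finset.sum_le_sum fun j _ => ?_
          rw [key j]; exact hfac j
      _ = (Fintype.card J : ℝ) * (2 * Real.exp (θ^2/2))^n := by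
          rw [Finset.sum_const, Finset.card_univ, nsmul_eq_mul]
      _ = (2^n : ℕ) • c := by
          rw [mul_pow, nsmul_eq_mul, hc]; push_cast; ring
  obtain ⟨σ, -, hσ⟩ := Finset.exists_le_of_sum_le ⟨∅, Finset.empty_mem_powerset F⟩ total
  refine ⟨σ, fun j => ?_⟩
  have h1 : Real.exp (θ * ∑ l ∈ F, (if l ∈ σ then (1:ℝ) else -1) * u j l) ≤ c :=
    le_trans (Finset.single_le_sum
      (f := fun j' => Real.exp (θ * ∑ l ∈ F, (if l ∈ σ then (1:ℝ) else -1) * u j' l))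
      (fun j' _ => (Real.exp_pos _).le) (Finset.mem_univ j)) hσ
  have hcard : (0:ℝ) < (Fintype.card J : ℝ) := by exact_mod_cast Fintype.card_pos
  have h2 : c = Real.exp (Real.log (Fintype.card J) + n * (θ^2/2)) := by
    rw [hc, Real.exp_add, Real.exp_log hcard, Real.exp_nat_mul]
  rw [h2] at h1
  have h3 := Real.exp_le_exp.mp h1
  have h4 : θ * (θ * n / 2 + Real.log (Fintype.card J) / θ)
      = Real.log (Fintype.card J) + n * (θ^2/2) := by
    field_simp; ring
  nlinarith [h3, h4]

lemma abs_exp_I_sub_exp_I (x y : ℝ) :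
    ‖Complex.exp (Complex.I * x) - Complex.exp (Complex.I * y)‖ ≤ |x - y| := by
  have h1 : Complex.exp (Complex.I * x) - Complex.exp (Complex.I * y)
      = Complex.exp (Complex.I * y) * (Complex.exp (((x - y : ℝ) : ℂ) * Complex.I) - 1) := by
    rw [mul_sub, ← Complex.exp_add, mul_one]
    push_cast
    ring_nf
  rw [h1, norm_mul]
  have h2 : ‖Complex.exp (Complex.I * y)‖ = 1 := by
    rw [Complex.norm_exp]
    simp
  rw [h2, one_mul]
  set t : ℝ := x - y with ht
  clear_value t
  have hre : ((Complex.exp ((t:ℂ) * Complex.I) - 1)).re = Real.cos t - 1 := by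
    simp [Complex.exp_ofReal_mul_I_re]
  have him : ((Complex.exp ((t:ℂ) * Complex.I) - 1)).im = Real.sin t := by
    simp [Complex.exp_ofReal_mul_I_im]
  rw [Complex.norm_def, Complex.normSq_apply, hre, him]
  have hc := Real.one_sub_sq_div_two_le_cos (x := t)
  have hs := Real.sin_sq_add_cos_sq t
  have hle : (Real.cos t - 1) * (Real.cos t - 1) + Real.sin t * Real.sin t ≤ t^2 := by
    have he : (Real.cos t - 1) * (Real.cos t - 1) + Real.sin t * Real.sin t
        = 2 - 2 * Real.cos t := by linear_combination hs
    linarith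
  calc Real.sqrt ((Real.cos t - 1) * (Real.cos t - 1) + Real.sin t * Real.sin t)
      ≤ Real.sqrt (t^2) := Real.sqrt_le_sqrt hle
    _ = |t| := Real.sqrt_sq_eq_abs t

lemma sidon_aux_lip (F : Finset ℕ) (N : ℕ) (a : ℕ → ℂ)
    (ha : ∀ l, ‖a l‖ = 1) (hF : ∀ l ∈ F, (l:ℝ) ≤ (N:ℝ)) (s t : ℝ) :
    ‖(∑ l ∈ F, a l * Complex.exp (Complex.I * l * t))
      - ∑ l ∈ F, a l * Complex.exp (Complex.I * l * s)‖
    ≤ (F.card : ℝ) * N * |t - s| := by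
  rw [← Finset.sum_sub_distrib]
  calc ‖∑ l ∈ F, (a l * Complex.exp (Complex.I * l * t)
          - a l * Complex.exp (Complex.I * l * s))‖
      ≤ ∑ l ∈ F, ‖a l * Complex.exp (Complex.I * l * t)
          - a l * Complex.exp (Complex.I * l * s)‖ :=
        norm_sum_le _ _
    _ ≤ ∑ l ∈ F, (N:ℝ) * |t - s| := by
        refine Finset.sum_le_sum fun l hl => ?_
        rw [← mul_sub, norm_mul, ha l, one_mul]
        have h1 : Complex.I * (l:ℂ) * (t:ℂ) = Complex.I * (((l:ℝ) * t : ℝ) : ℂ) := by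
          push_cast; ring
        have h2 : Complex.I * (l:ℂ) * (s:ℂ) = Complex.I * (((l:ℝ) * s : ℝ) : ℂ) := by
          push_cast; ring
        rw [h1, h2]
        calc ‖Complex.exp (Complex.I * (((l:ℝ) * t : ℝ) : ℂ))
              - Complex.exp (Complex.I * (((l:ℝ) * s : ℝ) : ℂ))‖
            ≤ |(l:ℝ) * t - (l:ℝ) * s| := abs_exp_I_sub_exp_I _ _
          _ = (l:ℝ) * |t - s| := by
              rw [← mul_sub, abs_mul, abs_of_nonneg (by positivity : (0:ℝ) ≤ (l:ℝ))]
          _ ≤ (N:ℝ) * |t - s| :=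
              mul_le_mul_of_nonneg_right (hF l hl) (abs_nonneg _)
    _ = (F.card : ℝ) * N * |t - s| := by
        rw [Finset.sum_const, nsmul_eq_mul]; ring

lemma sidon_aux_sup (F : Finset ℕ) (N M : ℕ) (hM : 0 < M) (a : ℕ → ℂ)
    (ha : ∀ l, ‖a l‖ = 1) (hF : ∀ l ∈ F, (l:ℝ) ≤ (N:ℝ)) (D : ℝ)
    (hgrid : ∀ j : ℕ, j < M →
      ‖∑ l ∈ F, a l * Complex.exp (Complex.I * l *
        ((2 * Real.pi * j / M : ℝ) : ℂ))‖ ≤ D)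
    (t : ℝ) :
    ‖∑ l ∈ F, a l * Complex.exp (Complex.I * l * t)‖
      ≤ D + (F.card : ℝ) * N * (2 * Real.pi / M) := by
  have hπ := Real.pi_pos
  have hMR : (0:ℝ) < (M:ℝ) := by exact_mod_cast hM
  set k : ℤ := ⌊t / (2 * Real.pi)⌋ with hkdef
  set t' : ℝ := t - 2 * Real.pi * k with ht'def
  clear_value k t'
  have ht'0 : 0 ≤ t' := by
    have h1 : (k:ℝ) ≤ t / (2 * Real.pi) := by rw [hkdef]; exact Int.floor_le _
    have h2 : (k:ℝ) * (2 * Real.pi) ≤ t := by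
      rw [← le_div_iff₀ (by positivity)]; exact h1
    rw [ht'def]; linarith
  have ht'lt : t' < 2 * Real.pi := by
    have h1 : t / (2 * Real.pi) < (k:ℝ) + 1 := by rw [hkdef]; exact Int.lt_floor_add_one _
    have h2 : t < ((k:ℝ) + 1) * (2 * Real.pi) := by
      rw [← div_lt_iff₀ (by positivity)]; exact h1
    rw [ht'def]; nlinarith
  have hper : (∑ l ∈ F, a l * Complex.exp (Complex.I * l * t))
      = ∑ l ∈ F, a l * Complex.exp (Complex.I * l * ((t' : ℝ) : ℂ)) := by
    refine Finset.sum_congr rfl fun l _ => ?_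
    congr 1
    have he : Complex.I * (l:ℂ) * (t:ℂ)
        = Complex.I * (l:ℂ) * ((t':ℝ):ℂ) + ((l * k : ℤ):ℂ) * (2 * Real.pi * Complex.I) := by
      rw [ht'def]
      push_cast
      ring
    rw [he, Complex.exp_add, Complex.exp_int_mul_two_pi_mul_I, mul_one]
  set j0 : ℕ := ⌊t' * M / (2 * Real.pi)⌋₊ with hj0def
  have h1 : (j0:ℝ) ≤ t' * M / (2 * Real.pi) := by
    rw [hj0def]; exact Nat.floor_le (by positivity)
  have h2 : t' * M / (2 * Real.pi) < (j0:ℝ) + 1 := by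
    rw [hj0def]; exact Nat.lt_floor_add_one _
  clear_value j0
  have hj0lt : j0 < M := by
    have h1' : (j0:ℝ) < (M:ℝ) := by
      have : t' * M / (2 * Real.pi) < M := by
        rw [div_lt_iff₀ (by positivity)]
        nlinarith
      linarith
    exact_mod_cast h1'
  have h1' : (j0:ℝ) * (2 * Real.pi) ≤ t' * M := (le_div_iff₀ (by positivity)).mp h1
  have h2' : t' * M < ((j0:ℝ) + 1) * (2 * Real.pi) := (div_lt_iff₀ (by positivity)).mp h2
  have hclose : |t' - 2 * Real.pi * j0 / M| ≤ 2 * Real.pi / M := by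
    rw [abs_le]
    constructor
    · have hA : 2 * Real.pi * j0 / M ≤ t' := by
        rw [div_le_iff₀ hMR]; nlinarith
      have hB' : 0 < 2 * Real.pi / M := by positivity
      linarith
    · rw [sub_le_iff_le_add]
      have hE : 2 * Real.pi * (j0:ℝ) / M + 2 * Real.pi / (M:ℝ)
          = (2 * Real.pi * j0 + 2 * Real.pi) / M := by ring
      have hgoal : t' ≤ (2 * Real.pi * j0 + 2 * Real.pi) / M := by
        rw [le_div_iff₀ hMR]; nlinarith
      linarith
  have hgj := hgrid j0 hj0lt
  have hlipj := sidon_aux_lip F N a ha hF (2 * Real.pi * j0 / M) t'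
  have herr : (F.card : ℝ) * N * |t' - 2 * Real.pi * j0 / M|
      ≤ (F.card : ℝ) * N * (2 * Real.pi / M) :=
    mul_le_mul_of_nonneg_left hclose (by positivity)
  have htri : ‖∑ l ∈ F, a l * Complex.exp (Complex.I * l * ((t' : ℝ) : ℂ))‖
      ≤ ‖∑ l ∈ F, a l * Complex.exp (Complex.I * l *
          ((2 * Real.pi * j0 / M : ℝ) : ℂ))‖
        + ‖(∑ l ∈ F, a l * Complex.exp (Complex.I * l * ((t' : ℝ) : ℂ)))
          - ∑ l ∈ F, a l * Complex.exp (Complex.I * l *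
            ((2 * Real.pi * j0 / M : ℝ) : ℂ))‖ := by
    have hXY : (∑ l ∈ F, a l * Complex.exp (Complex.I * l *
          ((2 * Real.pi * j0 / M : ℝ) : ℂ)))
        + ((∑ l ∈ F, a l * Complex.exp (Complex.I * l * ((t' : ℝ) : ℂ)))
          - ∑ l ∈ F, a l * Complex.exp (Complex.I * l *
            ((2 * Real.pi * j0 / M : ℝ) : ℂ)))
        = ∑ l ∈ F, a l * Complex.exp (Complex.I * l * ((t' : ℝ) : ℂ)) := by ring
    calc ‖∑ l ∈ F, a l * Complex.exp (Complex.I * l * ((t' : ℝ) : ℂ))‖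
        = ‖_‖ := (congrArg norm hXY).symm
      _ ≤ _ := norm_add_le _ _
  rw [hper]
  calc ‖∑ l ∈ F, a l * Complex.exp (Complex.I * l * ((t' : ℝ) : ℂ))‖
      ≤ _ := htri
    _ ≤ D + (F.card : ℝ) * N * (2 * Real.pi / M) := by
        have := le_trans hlipj herr
        linarith

set_option maxHeartbeats 1000000 in
/-- If `Λ ⊆ ℕ` is a Sidon set then `|Λ ∩ [1, N]| = O(log N)`. -/
theorem sidon_count_le_log (Λ : Set ℕ) [DecidablePred (· ∈ Λ)] (h : IsSidonSetNat Λ) :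
    ∃ K : ℝ, ∀ N : ℕ, 2 ≤ N →
      (((Finset.Icc 1 N).filter (fun n => n ∈ Λ)).card : ℝ) ≤ K * Real.log N := by
  classical
  obtain ⟨C₀, hC₀⟩ := h
  set C : ℝ := max C₀ 1 with hCdef
  have hC1 : (1:ℝ) ≤ C := le_max_right _ _
  have hC0le : C₀ ≤ C := le_max_left _ _
  clear_value C
  refine ⟨160 * C^2 + 12 * C, ?_⟩
  intro N hN
  have hN2 : (2:ℝ) ≤ (N:ℝ) := by exact_mod_cast hN
  have hlogN : Real.log 2 ≤ Real.log N := Real.log_le_log (by norm_num) hN2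
  have hlog2 : (0.6931:ℝ) < Real.log 2 := by
    have := Real.log_two_gt_d9; norm_num at this ⊢; linarith
  have hlogNpos : (0:ℝ) < Real.log N := by linarith
  set F := (Finset.Icc 1 N).filter (fun n => n ∈ Λ) with hFdef
  have hnN : F.card ≤ N := by
    rw [hFdef]
    calc ((Finset.Icc 1 N).filter (fun n => n ∈ Λ)).card
        ≤ (Finset.Icc 1 N).card := Finset.card_filter_le _ _
      _ = N := by rw [Nat.card_Icc]; omega
  have hFle : ∀ l ∈ F, (l:ℝ) ≤ (N:ℝ) := by
    intro l hl
    rw [hFdef] at hl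
    have := (Finset.mem_Icc.mp (Finset.mem_filter.mp hl).1).2
    exact_mod_cast this
  have hFsub : (F : Set ℕ) ⊆ Λ := by
    intro l hl
    rw [hFdef] at hl
    exact (Finset.mem_filter.mp hl).2
  clear_value F
  by_cases hn0 : F.card = 0
  · rw [hn0]
    have : (0:ℝ) ≤ (160 * C^2 + 12 * C) * Real.log N := by positivity
    push_cast
    linarith
  have hn1 : 1 ≤ F.card := Nat.one_le_iff_ne_zero.mpr hn0
  have hnR : (1:ℝ) ≤ (F.card:ℝ) := by exact_mod_cast hn1
  have hnNR : (F.card : ℝ) ≤ (N:ℝ) := by exact_mod_cast hnN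
  have hNpos : (0:ℝ) < (N:ℝ) := by linarith
  have hN2sq : (4:ℝ) ≤ (N:ℝ)^2 := by nlinarith
  -- grid size
  set M : ℕ := N^3 with hMdef
  have hM0 : 0 < M := by rw [hMdef]; positivity
  have hMR : (M:ℝ) = (N:ℝ)^3 := by rw [hMdef]; push_cast; ring
  haveI hJne : Nonempty (Fin M) := ⟨⟨0, hM0⟩⟩
  have hcardJN : Fintype.card (Fin M × Bool × Bool) = M * 4 := by
    simp [Fintype.card_prod]
  clear_value M
  have hMpos : (0:ℝ) < (M:ℝ) := by rw [hMR]; positivity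
  set L : ℝ := Real.log (Fintype.card (Fin M × Bool × Bool)) with hLdef
  have hcardJ : ((Fintype.card (Fin M × Bool × Bool)) : ℝ) = 4 * (N:ℝ)^3 := by
    rw [hcardJN]
    push_cast
    rw [hMR]
    ring
  have hLpos : 0 < L := by
    rw [hLdef]
    apply Real.log_pos
    rw [hcardJ]
    nlinarith
  have hL5 : L ≤ 5 * Real.log N := by
    rw [hLdef]
    have h1 : ((Fintype.card (Fin M × Bool × Bool)) : ℝ) ≤ (N:ℝ)^5 := by
      rw [hcardJ]
      nlinarith [mul_nonneg (pow_nonneg hNpos.le 3) (sub_nonneg.mpr hN2sq)]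
    calc Real.log _ ≤ Real.log ((N:ℝ)^5) :=
          Real.log_le_log (by rw [hcardJ]; positivity) h1
      _ = 5 * Real.log N := by rw [Real.log_pow]; push_cast; ring
  clear_value L
  set θ : ℝ := Real.sqrt (2 * L / F.card) with hθdef
  have hfr : (0:ℝ) < 2 * L / F.card := by positivity
  have hθpos : 0 < θ := by rw [hθdef]; exact Real.sqrt_pos.mpr hfr
  have hθsq : θ^2 = 2 * L / F.card := by rw [hθdef]; exact Real.sq_sqrt hfr.le
  clear_value θ
  set u : Fin M × Bool × Bool → ℕ → ℝ := fun p l =>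
    (if p.2.1 then (1:ℝ) else -1) *
      (if p.2.2 then Real.cos ((l:ℝ) * (2 * Real.pi * (p.1:ℝ) / M))
       else Real.sin ((l:ℝ) * (2 * Real.pi * (p.1:ℝ) / M))) with hudef
  have hub : ∀ p l, |u p l| ≤ 1 := by
    intro p l
    rw [hudef]
    dsimp only
    rw [abs_mul]
    split_ifs <;>
      simp [Real.abs_cos_le_one, Real.abs_sin_le_one]
  obtain ⟨σ, hσ⟩ := sidon_aux_signs F u hub θ hθpos
  set ε : ℕ → ℝ := fun l => if l ∈ σ then (1:ℝ) else -1 with hεdef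
  set a : ℕ → ℂ := fun l => ((ε l : ℝ) : ℂ) with hadef
  have habs : ∀ l, ‖a l‖ = 1 := by
    intro l
    rw [hadef]
    dsimp only
    rw [hεdef]
    dsimp only
    split_ifs <;> simp
  set B : ℝ := θ * F.card with hBdef
  have hB0 : 0 ≤ B := by rw [hBdef]; positivity
  have hBval : θ * (F.card:ℝ) / 2 + L / θ = B := by
    have hLv : L = θ^2 * F.card / 2 := by
      rw [hθsq]; field_simp
    rw [hBdef, hLv]
    rw [div_add_div _ _ two_ne_zero hθpos.ne', div_eq_iff (mul_ne_zero two_ne_zero hθpos.ne')]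
    ring
  have hB2 : B^2 = 2 * L * F.card := by
    rw [hBdef, mul_pow, hθsq]
    field_simp
  clear_value B
  -- four grid sums
  have hσ' : ∀ (j : ℕ) (hj : j < M) (s c : Bool),
      ∑ l ∈ F, ε l * ((if s then (1:ℝ) else -1) *
        (if c then Real.cos ((l:ℝ) * (2 * Real.pi * (j:ℝ) / M))
         else Real.sin ((l:ℝ) * (2 * Real.pi * (j:ℝ) / M)))) ≤ B := by
    intro j hj s c
    have h1 := hσ (⟨j, hj⟩, s, c)
    simp only [hudef, Fin.val_mk] at h1
    rw [← hLdef] at h1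
    have hhalf : L / θ = B / 2 := by
      have h2 : θ * (F.card:ℝ) / 2 = B / 2 := by rw [hBdef]
      linarith
    simp only [hεdef]
    linarith
  have hRe : ∀ (j : ℕ), j < M →
      |∑ l ∈ F, ε l * Real.cos ((l:ℝ) * (2 * Real.pi * (j:ℝ) / M))| ≤ B := by
    intro j hj
    rw [abs_le]
    constructor
    · have h1 := hσ' j hj false true
      simp only [Bool.false_eq_true, if_false, if_true] at h1
      have h2 : ∑ l ∈ F, ε l * (-1 * Real.cos ((l:ℝ) * (2 * Real.pi * (j:ℝ) / M)))
          = - ∑ l ∈ F, ε l * Real.cos ((l:ℝ) * (2 * Real.pi * (j:ℝ) / M)) := by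
        rw [← Finset.sum_neg_distrib]
        exact Finset.sum_congr rfl fun l _ => by ring
      rw [h2] at h1
      linarith
    · have h1 := hσ' j hj true true
      simp only [if_true, one_mul] at h1
      exact h1
  have hIm : ∀ (j : ℕ), j < M →
      |∑ l ∈ F, ε l * Real.sin ((l:ℝ) * (2 * Real.pi * (j:ℝ) / M))| ≤ B := by
    intro j hj
    rw [abs_le]
    constructor
    · have h1 := hσ' j hj false false
      simp only [Bool.false_eq_true, if_false] at h1
      have h2 : ∑ l ∈ F, ε l * (-1 * Real.sin ((l:ℝ) * (2 * Real.pi * (j:ℝ) / M)))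
          = - ∑ l ∈ F, ε l * Real.sin ((l:ℝ) * (2 * Real.pi * (j:ℝ) / M)) := by
        rw [← Finset.sum_neg_distrib]
        exact Finset.sum_congr rfl fun l _ => by ring
      rw [h2] at h1
      linarith
    · have h1 := hσ' j hj true false
      simp only [if_true, Bool.false_eq_true, if_false, one_mul] at h1
      exact h1
  -- real and imaginary parts
  have hSre : ∀ t : ℝ, (∑ l ∈ F, a l * Complex.exp (Complex.I * l * t)).re
      = ∑ l ∈ F, ε l * Real.cos ((l:ℝ) * t) := by
    intro t
    rw [Complex.re_sum]
    refine Finset.sum_congr rfl fun l _ => ?_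
    have he : Complex.I * (l:ℂ) * (t:ℂ) = (((l:ℝ) * t : ℝ) : ℂ) * Complex.I := by
      push_cast; ring
    rw [hadef]
    dsimp only
    rw [he, Complex.re_ofReal_mul, Complex.exp_ofReal_mul_I_re]
  have hSim : ∀ t : ℝ, (∑ l ∈ F, a l * Complex.exp (Complex.I * l * t)).im
      = ∑ l ∈ F, ε l * Real.sin ((l:ℝ) * t) := by
    intro t
    rw [Complex.im_sum]
    refine Finset.sum_congr rfl fun l _ => ?_
    have he : Complex.I * (l:ℂ) * (t:ℂ) = (((l:ℝ) * t : ℝ) : ℂ) * Complex.I := by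
      push_cast; ring
    rw [hadef]
    dsimp only
    rw [he, Complex.im_ofReal_mul, Complex.exp_ofReal_mul_I_im]
  have hgrid : ∀ j : ℕ, j < M →
      ‖∑ l ∈ F, a l * Complex.exp (Complex.I * l *
        ((2 * Real.pi * j / M : ℝ) : ℂ))‖ ≤ 2 * B := by
    intro j hj
    calc ‖∑ l ∈ F, a l * Complex.exp (Complex.I * l *
            ((2 * Real.pi * j / M : ℝ) : ℂ))‖
        ≤ |(∑ l ∈ F, a l * Complex.exp (Complex.I * l *
            ((2 * Real.pi * j / M : ℝ) : ℂ))).re|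
          + |(∑ l ∈ F, a l * Complex.exp (Complex.I * l *
            ((2 * Real.pi * j / M : ℝ) : ℂ))).im| :=
          Complex.norm_le_abs_re_add_abs_im _
      _ ≤ B + B := by
          rw [hSre, hSim]
          exact add_le_add (hRe j hj) (hIm j hj)
      _ = 2 * B := by ring
  -- pointwise bound
  have herr : (F.card : ℝ) * N * (2 * Real.pi / M) ≤ 4 := by
    rw [hMR]
    have he : (F.card:ℝ) * N * (2 * Real.pi / (N:ℝ)^3)
        = 2 * Real.pi * F.card / (N:ℝ)^2 := by
      field_simp
    rw [he, div_le_iff₀ (by positivity : (0:ℝ) < (N:ℝ)^2)]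
    have hh1 : 2 * Real.pi * (F.card:ℝ) ≤ 2 * Real.pi * (N:ℝ) := by
      nlinarith [Real.pi_pos]
    have hh2 : Real.pi * (N:ℝ) ≤ 4 * (N:ℝ) :=
      mul_le_mul_of_nonneg_right Real.pi_le_four hNpos.le
    have hh3 : 8 * (N:ℝ) ≤ 4 * (N:ℝ)^2 := by nlinarith
    nlinarith
  have hpt : ∀ t : ℝ,
      ‖∑ l ∈ F, a l * Complex.exp (Complex.I * l * t)‖ ≤ 2 * B + 4 := by
    intro t
    have := sidon_aux_sup F N M hM0 a habs hFle (2 * B) hgrid t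
    linarith
  -- apply the Sidon property
  have hmain := hC₀ F hFsub a
  have hsum : ∑ l ∈ F, ‖a l‖ = (F.card : ℝ) := by
    rw [Finset.sum_congr rfl fun l _ => habs l, Finset.sum_const, nsmul_eq_mul, mul_one]
  have hsup0 : 0 ≤ ⨆ t : ℝ, ‖∑ l ∈ F, a l * Complex.exp (Complex.I * l * t)‖ :=
    Real.iSup_nonneg fun t => norm_nonneg _
  have hsup : (⨆ t : ℝ, ‖∑ l ∈ F, a l * Complex.exp (Complex.I * l * t)‖)
      ≤ 2 * B + 4 := ciSup_le hpt
  have hfinal : (F.card : ℝ) ≤ C * (2 * B + 4) := by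
    rw [hsum] at hmain
    have h5 : C₀ * (⨆ t : ℝ, ‖∑ l ∈ F, a l * Complex.exp (Complex.I * l * t)‖)
        ≤ C * (⨆ t : ℝ, ‖∑ l ∈ F, a l * Complex.exp (Complex.I * l * t)‖) :=
      mul_le_mul_of_nonneg_right hC0le hsup0
    have h6 : C * (⨆ t : ℝ, ‖∑ l ∈ F, a l * Complex.exp (Complex.I * l * t)‖)
        ≤ C * (2 * B + 4) := mul_le_mul_of_nonneg_left hsup (by linarith)
    linarith
  -- final algebra
  clear hσ hσ' hRe hIm hSre hSim hgrid hpt hmain hsup hsup0 hsum hub habs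
  clear hudef hεdef hadef a ε u σ hC₀ hFsub hFdef hFle hθdef hθpos hθsq hfr hLdef
  have hB2' : B^2 ≤ 10 * Real.log N * F.card := by
    rw [hB2]
    nlinarith [mul_le_mul_of_nonneg_right hL5 (by positivity : (0:ℝ) ≤ (F.card:ℝ))]
  have hCpos : (0:ℝ) < C := by linarith
  have hexp : C * (2 * B + 4) = 2 * (C * B) + 4 * C := by ring
  rw [hexp] at hfinal
  by_cases hcase : (F.card : ℝ) ≤ 8 * C
  · have h12 : (0:ℝ) < 12 * Real.log N - 8 := by linarith
    have h1 : 0 < C * (12 * Real.log N - 8) := mul_pos hCpos h12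
    have h2 : (0:ℝ) ≤ 160 * C^2 * Real.log N := by positivity
    nlinarith [h1, h2, hcase]
  · push_neg at hcase
    have h0 : (0:ℝ) ≤ (F.card:ℝ) := by linarith
    have h7 : (F.card : ℝ) ≤ 4 * (C * B) := by linarith
    have h8 : (F.card : ℝ)^2 ≤ 16 * (C * B)^2 := by nlinarith [h7, h0]
    have h9 : (F.card : ℝ)^2 ≤ 160 * C^2 * Real.log N * F.card := by
      have hmm := mul_le_mul_of_nonneg_left hB2' (by positivity : (0:ℝ) ≤ 16 * C^2)
      nlinarith [h8, hmm]
    have hpos : (0:ℝ) < (F.card:ℝ) := by linarith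
    have h10 : (F.card : ℝ) ≤ 160 * C^2 * Real.log N := by nlinarith [h9, hpos]
    have h11 : (0:ℝ) ≤ 12 * C * Real.log N := by positivity
    nlinarith [h10, h11]
end

section
/- The sequence Y_N = ∫_I ∏_{n=1}^N f(nt)^{ξ_n} exp(-(α/n)(f(nt) - 1)) dt is a nonnegative martingale with respect to the filtration generated by ξ_1, ..., ξ_N, where ξ_n are independent Poisson variables of parameters α/n and f is a fixed bounded nonnegative function on the circle with ∫ f = 1. -/
open MeasureTheory ProbabilityTheory
open scoped NNReal ENNReal

lemma my_poisson_hasSum (r : ℝ≥0) {c : ℝ} (hc : 0 ≤ c) :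
    HasSum (fun k : ℕ => poissonPMFReal r k * c ^ k) (Real.exp (r * (c - 1))) := by
  have h1 : HasSum (fun k : ℕ => ((r : ℝ) * c) ^ k / k.factorial)
      (Real.exp ((r : ℝ) * c)) := by
    rw [Real.exp_eq_exp_ℝ]
    exact NormedSpace.expSeries_div_hasSum_exp ((r : ℝ) * c)
  have h2 := h1.mul_left (Real.exp (-(r : ℝ)))
  have e1 : Real.exp (-(r : ℝ)) * Real.exp ((r : ℝ) * c) = Real.exp ((r : ℝ) * (c - 1)) := by
    rw [← Real.exp_add]; ring_nf
  rw [e1] at h2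
  convert h2 using 1
  · rfl
  funext k
  simp only [poissonPMFReal, mul_pow]
  ring

lemma my_poissonMeasure_singleton (r : ℝ≥0) (k : ℕ) :
    poissonMeasure r {k} = ENNReal.ofReal (poissonPMFReal r k) := by
  rw [poissonMeasure, Measure.sum_smul_dirac_singleton]
  rfl

lemma my_poisson_pow_integrable (r : ℝ≥0) {c : ℝ} (hc : 0 ≤ c) :
    Integrable (fun k : ℕ => c ^ k) (poissonMeasure r) := by
  refine ⟨measurable_from_nat.aestronglyMeasurable, ?_⟩
  have hfin : ∫⁻ k, ‖c ^ k‖₊ ∂(poissonMeasure r) < ⊤ := by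
    rw [lintegral_countable']
    have hs := (my_poisson_hasSum r hc).summable
    calc ∑' k : ℕ, (‖c ^ k‖₊ : ℝ≥0∞) * poissonMeasure r {k}
        = ∑' k : ℕ, ENNReal.ofReal (poissonPMFReal r k * c ^ k) := by
          refine tsum_congr fun k => ?_
          rw [my_poissonMeasure_singleton, ← enorm_eq_nnnorm, Real.enorm_eq_ofReal (pow_nonneg hc k),
            ← ENNReal.ofReal_mul (pow_nonneg hc k), mul_comm]
      _ = ENNReal.ofReal (∑' k : ℕ, poissonPMFReal r k * c ^ k) :=
          (ENNReal.ofReal_tsum_of_nonneg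
            (fun k => mul_nonneg poissonPMFReal_nonneg (pow_nonneg hc k)) hs).symm
      _ < ⊤ := ENNReal.ofReal_lt_top
  exact hfin

lemma my_poisson_pow_integral (r : ℝ≥0) {c : ℝ} (hc : 0 ≤ c) :
    ∫ k, c ^ k ∂(poissonMeasure r) = Real.exp (r * (c - 1)) := by
  rw [integral_countable' (my_poisson_pow_integrable r hc)]
  have h : ∀ k : ℕ, (poissonMeasure r {k}).toReal • (c ^ k) = poissonPMFReal r k * c ^ k := by
    intro k
    rw [my_poissonMeasure_singleton, ENNReal.toReal_ofReal poissonPMFReal_nonneg, smul_eq_mul]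
  simp_rw [measureReal_def]
  rw [tsum_congr h]
  exact (my_poisson_hasSum r hc).tsum_eq

/-- With `ξ n` independent Poisson variables of parameters `α/(n+1)` (so `ξ 0, ξ 1, …`
play the role of `ξ_1, ξ_2, …`), `f` a bounded nonnegative `1`-periodic function with
`∫_𝕋 f = 1`, and `I` an interval of the circle, the sequence
`Y N = ∫_I ∏_{n=1}^N f(nt)^{ξ_n} exp(-(α/n)(f(nt)-1)) dt` is a nonnegative martingale
for the filtration generated by `ξ_1, …, ξ_N`. -/
theorem random_product_integral_is_martingale
    {Ω : Type*} [MeasurableSpace Ω] (μ : Measure Ω) [IsProbabilityMeasure μ]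
    (α : ℝ) (hα : 0 < α)
    (ξ : ℕ → Ω → ℕ) (hmeas : ∀ n, StronglyMeasurable (ξ n))
    (hindep : iIndepFun ξ μ)
    (hdist : ∀ n : ℕ, μ.map (ξ n) = poissonMeasure (⟨α, hα.le⟩ / ((n : NNReal) + 1)))
    (f : ℝ → ℝ) (hfmeas : Measurable f) (hf0 : ∀ t, 0 ≤ f t)
    (hfper : Function.Periodic f 1) (hfbdd : ∃ B : ℝ, ∀ t, f t ≤ B)
    (hfint : ∫ t in (0:ℝ)..1, f t = 1)
    (I : Set ℝ) (hI : MeasurableSet I) (hI' : I ⊆ Set.Icc 0 1)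
    (Y : ℕ → Ω → ℝ)
    (hY : ∀ N ω, Y N ω = ∫ t in I, ∏ n ∈ Finset.range N,
      (f ((n + 1) * t)) ^ (ξ n ω) *
        Real.exp (-(α / (n + 1)) * (f ((n + 1) * t) - 1)) ∂volume) :
    (∀ N ω, 0 ≤ Y N ω) ∧
      Martingale (fun N => Y (N + 1)) (Filtration.natural ξ hmeas) μ := by
  classical
  obtain ⟨B, hB⟩ := hfbdd
  set B' : ℝ := max B 1 with hB'def
  have hB'1 : (1:ℝ) ≤ B' := le_max_right _ _
  have hB'0 : (0:ℝ) ≤ B' := le_trans zero_le_one hB'1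
  have hfB' : ∀ t, f t ≤ B' := fun t => le_trans (hB t) (le_max_left _ _)
  set g : ℕ → ℝ → ℕ → ℝ := fun n t k =>
    f ((n + 1) * t) ^ k * Real.exp (-(α / (n + 1)) * (f ((n + 1) * t) - 1)) with hgdef
  set F : ℕ → Ω → ℝ → ℝ := fun M ω t => ∏ n ∈ Finset.range M, g n t (ξ n ω) with hFdef
  have hYF : ∀ M ω, Y M ω = ∫ t in I, F M ω t ∂volume := fun M ω => hY M ω
  have hg0 : ∀ n t k, 0 ≤ g n t k := fun n t k =>
    mul_nonneg (pow_nonneg (hf0 _) _) (Real.exp_nonneg _)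
  have hα' : ∀ n : ℕ, 0 ≤ α / ((n:ℝ) + 1) := fun n => div_nonneg hα.le (by positivity)
  have hgle : ∀ n t k, g n t k ≤ B' ^ k * Real.exp (α / ((n:ℝ) + 1)) := by
    intro n t k
    have h1 : f ((n + 1) * t) ^ k ≤ B' ^ k := pow_le_pow_left₀ (hf0 _) (hfB' _) k
    have h2 : Real.exp (-(α / ((n:ℝ) + 1)) * (f ((n + 1) * t) - 1)) ≤
        Real.exp (α / ((n:ℝ) + 1)) := by
      apply Real.exp_le_exp.mpr
      have h3 := hf0 ((n + 1) * t)
      nlinarith [hα' n]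
    exact mul_le_mul h1 h2 (Real.exp_nonneg _) (pow_nonneg hB'0 _)
  have hF0 : ∀ M ω t, 0 ≤ F M ω t := fun M ω t =>
    Finset.prod_nonneg fun n _ => hg0 n t (ξ n ω)
  have hYnonneg : ∀ N ω, 0 ≤ Y N ω := by
    intro N ω
    rw [hYF N ω]
    exact integral_nonneg fun t => hF0 _ _ _
  -- transfer to the Poisson measure
  have hrcoe : ∀ n : ℕ, ((⟨α, hα.le⟩ / ((n : NNReal) + 1) : ℝ≥0) : ℝ)
      = α / ((n:ℝ) + 1) := by
    intro n
    push_cast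
    rfl
  have hint_pois : ∀ (n : ℕ) (h : ℕ → ℝ),
      Integrable h (poissonMeasure (⟨α, hα.le⟩ / ((n : NNReal) + 1))) →
      Integrable (fun ω => h (ξ n ω)) μ := by
    intro n h hh
    have h1 : Integrable h (μ.map (ξ n)) := by rw [hdist n]; exact hh
    exact (integrable_map_measure measurable_from_nat.aestronglyMeasurable
      (hmeas n).measurable.aemeasurable).mp h1
  have hintegral_pois : ∀ (n : ℕ) (h : ℕ → ℝ),
      ∫ ω, h (ξ n ω) ∂μ = ∫ k, h k ∂(poissonMeasure (⟨α, hα.le⟩ / ((n : NNReal) + 1))) := by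
    intro n h
    rw [← hdist n, integral_map (hmeas n).measurable.aemeasurable
      measurable_from_nat.aestronglyMeasurable]
  have hgint : ∀ n t, Integrable (fun ω => g n t (ξ n ω)) μ := fun n t =>
    hint_pois n (fun k => g n t k) ((my_poisson_pow_integrable _ (hf0 _)).mul_const _)
  have hgexp : ∀ n t, ∫ ω, g n t (ξ n ω) ∂μ = 1 := by
    intro n t
    rw [hintegral_pois n (fun k => g n t k)]
    simp only [hgdef]
    rw [integral_mul_const, my_poisson_pow_integral _ (hf0 _), hrcoe n, ← Real.exp_add]
    rw [show α / ((n:ℝ) + 1) * (f ((n + 1) * t) - 1) +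
        -(α / ((n:ℝ) + 1)) * (f ((n + 1) * t) - 1) = 0 by ring, Real.exp_zero]
  -- integrability of dominating products
  have hηint : ∀ n, Integrable (fun ω => B' ^ (ξ n ω)) μ := fun n =>
    hint_pois n (fun k => B' ^ k) (my_poisson_pow_integrable _ hB'0)
  have hηmeas : ∀ n, Measurable fun ω => B' ^ (ξ n ω) := fun n =>
    (measurable_from_nat (f := fun k => B' ^ k)).comp (hmeas n).measurable
  have hprodint : ∀ M, Integrable (fun ω => ∏ n ∈ Finset.range M, B' ^ (ξ n ω)) μ := by
    intro M
    induction M with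
    | zero => simpa using integrable_const (1:ℝ)
    | succ M ih =>
      have hiind : iIndepFun (fun n ω => B' ^ (ξ n ω)) μ :=
        hindep.comp (fun n (k : ℕ) => B' ^ k) (fun n => measurable_from_nat)
      have hIF : IndepFun (∏ j ∈ Finset.range M, fun ω => B' ^ (ξ j ω))
          (fun ω => B' ^ (ξ M ω)) μ :=
        hiind.indepFun_finsetProd_of_notMem (fun n => hηmeas n) Finset.notMem_range_self
      have hprodeq : (∏ j ∈ Finset.range M, fun ω => B' ^ (ξ j ω)) =
          fun ω => ∏ j ∈ Finset.range M, B' ^ (ξ j ω) := by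
        funext ω; exact Finset.prod_apply ω (Finset.range M) _
      rw [hprodeq] at hIF
      have h2 := hIF.integrable_mul ih (hηint M)
      refine h2.congr (Filter.Eventually.of_forall fun ω => ?_)
      simp [Finset.prod_range_succ]
  set Mb : ℕ → Ω → ℝ := fun M ω => (∏ n ∈ Finset.range M, B' ^ (ξ n ω)) *
    ∏ n ∈ Finset.range M, Real.exp (α / ((n:ℝ) + 1)) with hMbdef
  have hMb0 : ∀ M ω, 0 ≤ Mb M ω := fun M ω =>
    mul_nonneg (Finset.prod_nonneg fun n _ => pow_nonneg hB'0 _)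
      (Finset.prod_nonneg fun n _ => (Real.exp_nonneg _))
  have hMbint : ∀ M, Integrable (Mb M) μ := fun M => (hprodint M).mul_const _
  have hFbound : ∀ M ω t, F M ω t ≤ Mb M ω := by
    intro M ω t
    rw [hMbdef]
    dsimp only
    rw [← Finset.prod_mul_distrib]
    exact Finset.prod_le_prod (fun n _ => hg0 n t (ξ n ω)) (fun n _ => hgle n t (ξ n ω))
  have hFm : ∀ M, Measurable (fun p : Ω × ℝ => F M p.1 p.2) := by
    intro M
    apply Finset.measurable_prod
    intro n _
    have h1 : Measurable fun p : Ω × ℝ => f ((n + 1) * p.2) :=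
      hfmeas.comp (measurable_const.mul measurable_snd)
    have h2 : Measurable fun p : Ω × ℝ => ξ n p.1 := (hmeas n).measurable.comp measurable_fst
    exact (h1.pow h2).mul
      (Real.measurable_exp.comp ((h1.sub measurable_const).const_mul (-(α / ((n:ℝ) + 1)))))
  have hIfin : volume I < ⊤ :=
    lt_of_le_of_lt (measure_mono hI') (by simp)
  haveI : IsFiniteMeasure (volume.restrict I) :=
    ⟨by rwa [Measure.restrict_apply_univ]⟩
  have hProdInt : ∀ M (s : Set Ω), MeasurableSet s →
      Integrable (fun p : Ω × ℝ => F M p.1 p.2)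
        ((μ.restrict s).prod (volume.restrict I)) := by
    intro M s hs
    have hdom : Integrable (fun p : Ω × ℝ => Mb M p.1 * (1:ℝ))
        ((μ.restrict s).prod (volume.restrict I)) :=
      ((hMbint M).restrict).mul_prod (integrable_const 1)
    refine Integrable.mono hdom ((hFm M).aestronglyMeasurable) ?_
    refine Filter.Eventually.of_forall fun p => ?_
    rw [Real.norm_of_nonneg (hF0 M p.1 p.2), Real.norm_of_nonneg (by simpa using hMb0 M p.1)]
    simpa using hFbound M p.1 p.2
  have hswap : ∀ M (s : Set Ω), MeasurableSet s →
      ∫ ω in s, (∫ t in I, F M ω t ∂volume) ∂μ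
        = ∫ t in I, (∫ ω in s, F M ω t ∂μ) ∂volume :=
    fun M s hs => integral_integral_swap (hProdInt M s hs)
  have hYint : ∀ M, Integrable (Y M) μ := by
    intro M
    have h0 := hProdInt M Set.univ MeasurableSet.univ
    rw [Measure.restrict_univ] at h0
    exact h0.integral_prod_left.congr (Filter.Eventually.of_forall fun ω => (hYF M ω).symm)
  -- adaptedness
  have hξnat : ∀ N n, n ≤ N → Measurable[(Filtration.natural ξ hmeas) N] (ξ n) := by
    intro N n hn
    apply Measurable.of_comap_le
    exact le_iSup₂ (f := fun j (_ : j ≤ N) =>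
      MeasurableSpace.comap (ξ j) inferInstance) n hn
  have hAdapted : ∀ N, StronglyMeasurable[(Filtration.natural ξ hmeas) N] (Y (N + 1)) := by
    intro N
    have hvec : Measurable[(Filtration.natural ξ hmeas) N]
        (fun ω => fun i : Fin (N + 1) => ξ i ω) :=
      @measurable_pi_lambda _ _ _ ((Filtration.natural ξ hmeas) N) _
        _ fun i => hξnat N i (Nat.lt_succ_iff.mp i.2)
    set G : (Fin (N + 1) → ℕ) → ℝ :=
      fun k => ∫ t in I, ∏ i : Fin (N + 1), g i t (k i) ∂volume with hGdef
    have hYG : Y (N + 1) = fun ω => G (fun i => ξ i ω) := by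
      funext ω
      rw [hYF]
      simp only [hGdef]
      refine congrArg _ (funext fun t => ?_)
      exact (Fin.prod_univ_eq_prod_range (fun n => g n t (ξ n ω)) (N + 1)).symm
    rw [hYG]
    exact ((measurable_of_countable G).comp hvec).stronglyMeasurable
  -- the martingale property
  refine ⟨hYnonneg, martingale_nat (fun N => hAdapted N) (fun N => hYint (N + 1)) ?_⟩
  intro N
  have hmle := (Filtration.natural ξ hmeas).le N
  haveI : SigmaFinite (μ.trim hmle) := by
    haveI : IsFiniteMeasure (μ.trim hmle) := by
      constructor
      rw [trim_measurableSet_eq hmle (@MeasurableSet.univ Ω ((Filtration.natural ξ hmeas) N))]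
      exact measure_lt_top μ _
    infer_instance
  refine ae_eq_condExp_of_forall_setIntegral_eq hmle (hYint (N + 2))
    (fun s _ _ => (hYint (N + 1)).integrableOn) ?_
    ((hAdapted N).aestronglyMeasurable)
  intro s hs _
  have hs0 : MeasurableSet s := hmle s hs
  have hL : ∫ x in s, Y (N + 1) x ∂μ
      = ∫ t in I, (∫ ω in s, F (N + 1) ω t ∂μ) ∂volume := by
    rw [← hswap (N + 1) s hs0]
    exact integral_congr_ae (Filter.Eventually.of_forall fun ω => hYF _ ω)
  have hR : ∫ x in s, Y (N + 2) x ∂μ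
      = ∫ t in I, (∫ ω in s, F (N + 2) ω t ∂μ) ∂volume := by
    rw [← hswap (N + 2) s hs0]
    exact integral_congr_ae (Filter.Eventually.of_forall fun ω => hYF _ ω)
  rw [hL, hR]
  refine integral_congr_ae (Filter.Eventually.of_forall fun t => ?_)
  -- fixed t : one-step conditional computation
  set X : Ω → ℝ := fun ω => Set.indicator s (fun _ => (1:ℝ)) ω * F (N + 1) ω t with hXdef
  set Z : Ω → ℝ := fun ω => g (N + 1) t (ξ (N + 1) ω) with hZdef
  have hFmt : ∀ M, Measurable (fun ω => F M ω t) := fun M =>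
    (hFm M).comp (measurable_id.prodMk measurable_const)
  have hXmeas : Measurable X :=
    (measurable_const.indicator hs0).mul (hFmt (N + 1))
  have hXint : Integrable X μ := by
    refine Integrable.mono (hMbint (N + 1)) hXmeas.aestronglyMeasurable
      (Filter.Eventually.of_forall fun ω => ?_)
    rw [Real.norm_eq_abs, Real.norm_of_nonneg (hMb0 _ _), hXdef]
    dsimp only
    rw [abs_mul]
    have h1 : |Set.indicator s (fun _ => (1:ℝ)) ω| ≤ 1 := by
      by_cases hω : ω ∈ s <;> simp [Set.indicator, hω]
    have h2 : |F (N + 1) ω t| ≤ Mb (N + 1) ω := by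
      rw [abs_of_nonneg (hF0 _ _ _)]; exact hFbound _ _ _
    calc |Set.indicator s (fun _ => (1:ℝ)) ω| * |F (N + 1) ω t|
        ≤ 1 * Mb (N + 1) ω := mul_le_mul h1 h2 (abs_nonneg _) zero_le_one
      _ = Mb (N + 1) ω := one_mul _
  have hZint : Integrable Z μ := hgint (N + 1) t
  have hXm : Measurable[(Filtration.natural ξ hmeas) N] X := by
    refine Measurable.mul (measurable_const.indicator hs) ?_
    apply Finset.measurable_prod
    intro n hn
    exact (measurable_from_nat (f := fun k => g n t k)).comp
      (hξnat N n (Nat.lt_succ_iff.mp (Finset.mem_range.mp hn)))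
  have hZm : Measurable[MeasurableSpace.comap (ξ (N + 1)) inferInstance] Z :=
    (measurable_from_nat (f := fun k => g (N + 1) t k)).comp (Measurable.of_comap_le le_rfl)
  have hIndepSig : Indep ((Filtration.natural ξ hmeas) N)
      (MeasurableSpace.comap (ξ (N + 1)) inferInstance) μ := by
    have h_le : ∀ n, MeasurableSpace.comap (ξ n) inferInstance ≤ _ := fun n =>
      (hmeas n).measurable.comap_le
    have h := indep_biSup_compl h_le hindep (Set.Iic N)
    refine indep_of_indep_of_le_left (indep_of_indep_of_le_right h ?_) ?_
    · exact le_iSup₂ (f := fun n (_ : n ∈ (Set.Iic N)ᶜ) =>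
        MeasurableSpace.comap (ξ n) inferInstance) (N + 1) (by simp)
    · exact iSup₂_le fun j hj => le_iSup₂ (f := fun n (_ : n ∈ Set.Iic N) =>
        MeasurableSpace.comap (ξ n) inferInstance) j (Set.mem_Iic.mpr hj)
  have hIndepXZ : IndepFun X Z μ :=
    indep_of_indep_of_le_right (indep_of_indep_of_le_left hIndepSig hXm.comap_le) hZm.comap_le
  have h1 : ∀ ω, Set.indicator s (fun ω' => F (N + 2) ω' t) ω = X ω * Z ω := by
    intro ω
    by_cases hω : ω ∈ s
    · rw [Set.indicator_of_mem hω, hXdef]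
      dsimp only
      rw [Set.indicator_of_mem hω, one_mul, hZdef, hFdef]
      exact Finset.prod_range_succ _ _
    · rw [Set.indicator_of_notMem hω, hXdef]
      dsimp only
      rw [Set.indicator_of_notMem hω, zero_mul, zero_mul]
  have h2 : ∀ ω, Set.indicator s (fun ω' => F (N + 1) ω' t) ω = X ω := by
    intro ω
    by_cases hω : ω ∈ s
    · rw [Set.indicator_of_mem hω, hXdef]
      dsimp only
      rw [Set.indicator_of_mem hω, one_mul]
    · rw [Set.indicator_of_notMem hω, hXdef]
      dsimp only
      rw [Set.indicator_of_notMem hω, zero_mul]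
  calc ∫ ω in s, F (N + 1) ω t ∂μ
      = ∫ ω, Set.indicator s (fun ω' => F (N + 1) ω' t) ω ∂μ := (integral_indicator hs0).symm
    _ = ∫ ω, X ω ∂μ := integral_congr_ae (Filter.Eventually.of_forall h2)
    _ = (∫ ω, X ω ∂μ) * ∫ ω, Z ω ∂μ := by rw [hZdef, hgexp (N + 1) t, mul_one]
    _ = ∫ ω, X ω * Z ω ∂μ := (hIndepXZ.integral_mul_eq_mul_integral hXint.1 hZint.1).symm
    _ = ∫ ω, Set.indicator s (fun ω' => F (N + 2) ω' t) ω ∂μ :=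
        integral_congr_ae (Filter.Eventually.of_forall fun ω => (h1 ω).symm)
    _ = ∫ ω in s, F (N + 2) ω t ∂μ := integral_indicator hs0
end
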